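/- arXiv:1708.00067 — 3 statements merged into one kernel-verified Lean document; each statement's English description precedes it below -/
import Mathlib

section
/- For every real m < d there exist constants c, C > 0 depending only on m and d such that for all v₀ ∈ ℝ^d and all r > 0, the average of |v|^{-m} over the ball B_r(v₀) satisfies c·(max{|v₀|, 2r})^{-m} ≤ average ≤ C·(max{|v₀|, 2r})^{-m}. -/
open MeasureTheory Metric Set Real
open scoped ENNReal NNReal

section polar

variable {E' : Type*} [NormedAddCommGroup E'] [NormedSpace ℝ E']
    [MeasurableSpace E'] [BorelSpace E'] [FiniteDimensional ℝ E'] [Nontrivial E']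
    (μ : Measure E') [μ.IsAddHaarMeasure]

lemma my_lintegral_fun_norm_addHaar (g : ℝ → ℝ≥0∞) (hg : Measurable g) :
    ∫⁻ x, g ‖x‖ ∂μ = μ.toSphere Set.univ *
      ∫⁻ y : Set.Ioi (0:ℝ), g y ∂(Measure.volumeIoiPow (Module.finrank ℝ E' - 1)) := calc
  ∫⁻ x, g ‖x‖ ∂μ = ∫⁻ x : ({(0:E')}ᶜ : Set E'), g ‖x.1‖ ∂(μ.comap (↑)) := by
    rw [lintegral_subtype_comap (measurableSet_singleton (0:E')).compl (fun a => g ‖a‖),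
      restrict_compl_singleton]
  _ = ∫⁻ p : sphere (0:E') 1 × Set.Ioi (0:ℝ), g p.2
        ∂(μ.toSphere.prod (Measure.volumeIoiPow (Module.finrank ℝ E' - 1))) :=
    by have h := μ.measurePreserving_homeomorphUnitSphereProd.lintegral_comp
        (hg.comp (measurable_subtype_coe.comp measurable_snd))
       simpa [Function.comp_def, homeomorphUnitSphereProd_apply_snd_coe] using h
  _ = _ := by
    rw [MeasureTheory.lintegral_prod _ (by fun_prop)]
    simp [lintegral_const, mul_comm]

lemma my_lintegral_Ioi_volumeIoiPow (n : ℕ) (g : ℝ → ℝ≥0∞) (hg : Measurable g) :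
    ∫⁻ y : Set.Ioi (0:ℝ), g y ∂(Measure.volumeIoiPow n)
      = ∫⁻ y in Set.Ioi (0:ℝ), ENNReal.ofReal (y ^ n) * g y := by
  rw [Measure.volumeIoiPow, lintegral_withDensity_eq_lintegral_mul _ (by fun_prop) (by fun_prop)]
  rw [← lintegral_subtype_comap measurableSet_Ioi (fun y : ℝ => ENNReal.ofReal (y ^ n) * g y)]
  rfl

end polar

section rpowbounds

lemma my_min_rpow_le {A B x p : ℝ} (hA : 0 < A) (h1 : A ≤ x) (h2 : x ≤ B) :
    min (A ^ p) (B ^ p) ≤ x ^ p := by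
  rcases le_or_gt 0 p with hp | hp
  · exact le_trans (min_le_left _ _) (Real.rpow_le_rpow hA.le h1 hp)
  · exact le_trans (min_le_right _ _) (Real.rpow_le_rpow_of_nonpos (hA.trans_le h1) h2 hp.le)

lemma my_rpow_le_max {A B x p : ℝ} (hA : 0 < A) (h0 : 0 ≤ x) (h2 : x ≤ B)
    (h : 0 ≤ p ∨ A ≤ x) : x ^ p ≤ max (A ^ p) (B ^ p) := by
  rcases le_or_gt 0 p with hp | hp
  · exact le_trans (Real.rpow_le_rpow h0 h2 hp) (le_max_right _ _)
  · rcases h with hp' | hAx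
    · linarith
    · exact le_trans (Real.rpow_le_rpow_of_nonpos hA hAx hp.le) (le_max_left _ _)

end rpowbounds

section onedim

variable {d : ℕ} {m : ℝ}

lemma my_one_dim_eqOn (hd : 1 ≤ d) {R : ℝ} :
    Set.EqOn (fun y : ℝ => y ^ (d - 1 : ℕ) * y ^ (-m)) (fun y : ℝ => y ^ ((d:ℝ) - 1 - m))
      (Set.Ioc (0:ℝ) R) := by
  intro y hy
  have hy0 : 0 < y := hy.1
  simp only
  rw [← Real.rpow_natCast y (d - 1), ← Real.rpow_add hy0]
  congr 1
  rw [Nat.cast_sub hd]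
  push_cast
  ring

lemma my_one_dim_integrableOn (hd : 1 ≤ d) (hmd : m < d) {R : ℝ} (hR : 0 < R) :
    IntegrableOn (fun y : ℝ => y ^ (d - 1 : ℕ) * y ^ (-m)) (Set.Ioc (0:ℝ) R) := by
  have key : IntervalIntegrable (fun y : ℝ => y ^ ((d:ℝ) - 1 - m)) volume 0 R :=
    intervalIntegral.intervalIntegrable_rpow' (by linarith)
  have h2 := (intervalIntegrable_iff_integrableOn_Ioc_of_le hR.le).1 key
  exact h2.congr_fun (my_one_dim_eqOn hd).symm measurableSet_Ioc

lemma my_one_dim_integral (hd : 1 ≤ d) (hmd : m < d) {R : ℝ} (hR : 0 < R) :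
    ∫ y in Set.Ioc (0:ℝ) R, y ^ (d - 1 : ℕ) * y ^ (-m)
      = R ^ ((d:ℝ) - m) / ((d:ℝ) - m) := by
  rw [setIntegral_congr_fun measurableSet_Ioc (my_one_dim_eqOn hd),
    ← intervalIntegral.integral_of_le hR.le,
    integral_rpow (Or.inl (by linarith))]
  rw [Real.zero_rpow (by intro h; apply absurd h; intro h'; linarith [h'] : (d:ℝ) - 1 - m + 1 ≠ 0)]
  have : (d:ℝ) - 1 - m + 1 = (d:ℝ) - m := by ring
  rw [this]
  ring

end onedim
section euclid

variable {d : ℕ} {m : ℝ}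

local notation "E" => EuclideanSpace ℝ (Fin d)

lemma my_nontrivial (hd : 1 ≤ d) : Nontrivial (EuclideanSpace ℝ (Fin d)) := by
  apply Module.nontrivial_of_finrank_pos (R := ℝ)
  rw [finrank_euclideanSpace_fin]
  omega

lemma my_indicator_eq (hm : 0 < m) {R : ℝ} (hR : 0 < R) (x : E) :
    Set.indicator (Set.Ioc (0:ℝ) R) (fun y => y ^ (-m)) ‖x‖
      = Set.indicator (closedBall (0:E) R) (fun v => ‖v‖ ^ (-m)) x := by
  by_cases hx : x = 0
  · subst hx
    rw [Set.indicator_of_notMem (by simp), Set.indicator_of_mem (by simp [hR.le])]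
    simp only [norm_zero]
    rw [Real.zero_rpow (by linarith)]
  · have hx0 : 0 < ‖x‖ := norm_pos_iff.2 hx
    by_cases hxR : ‖x‖ ≤ R
    · rw [Set.indicator_of_mem (by exact ⟨hx0, hxR⟩),
        Set.indicator_of_mem (mem_closedBall_zero_iff.2 hxR)]
    · rw [Set.indicator_of_notMem (by simp [hxR]),
        Set.indicator_of_notMem (fun h => hxR (mem_closedBall_zero_iff.1 h))]

lemma my_integrable_indicator (hd : 1 ≤ d) (hmd : m < d) {R : ℝ} (hR : 0 < R) :
    Integrable (fun x : E => Set.indicator (Set.Ioc (0:ℝ) R) (fun y => y ^ (-m)) ‖x‖) := by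
  haveI := my_nontrivial hd
  have hGmeas : Measurable (fun y : ℝ => Set.indicator (Set.Ioc (0:ℝ) R) (fun y => y ^ (-m)) y) :=
    Measurable.indicator (by fun_prop) measurableSet_Ioc
  have hGnonneg : ∀ y : ℝ, 0 ≤ Set.indicator (Set.Ioc (0:ℝ) R) (fun y => y ^ (-m)) y := by
    intro y
    apply Set.indicator_nonneg
    intro z hz
    exact Real.rpow_nonneg hz.1.le _
  constructor
  · exact (hGmeas.comp measurable_norm).aestronglyMeasurable
  · rw [HasFiniteIntegral]
    have heq : (∫⁻ x : E, ‖Set.indicator (Set.Ioc (0:ℝ) R) (fun y => y ^ (-m)) ‖x‖‖ₑ)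
        = ∫⁻ x : E, ENNReal.ofReal (Set.indicator (Set.Ioc (0:ℝ) R) (fun y => y ^ (-m)) ‖x‖) :=
      lintegral_enorm_of_nonneg (fun x => hGnonneg ‖x‖)
    rw [heq, my_lintegral_fun_norm_addHaar volume
        (fun y => ENNReal.ofReal (Set.indicator (Set.Ioc (0:ℝ) R) (fun y => y ^ (-m)) y))
        (by fun_prop),
      my_lintegral_Ioi_volumeIoiPow _
        (fun y => ENNReal.ofReal (Set.indicator (Set.Ioc (0:ℝ) R) (fun y => y ^ (-m)) y))
        (by fun_prop)]
    apply ENNReal.mul_lt_top (measure_lt_top _ _)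
    have hfin : Module.finrank ℝ (EuclideanSpace ℝ (Fin d)) = d := finrank_euclideanSpace_fin
    rw [hfin]
    -- integrand identification
    have hcong : ∀ᵐ y ∂(volume.restrict (Set.Ioi (0:ℝ))),
        ENNReal.ofReal (y ^ (d - 1 : ℕ)) *
            ENNReal.ofReal (Set.indicator (Set.Ioc (0:ℝ) R) (fun y => y ^ (-m)) y)
          = ENNReal.ofReal (Set.indicator (Set.Ioc (0:ℝ) R)
              (fun y => y ^ (d - 1 : ℕ) * y ^ (-m)) y) := by
      filter_upwards [ae_restrict_mem measurableSet_Ioi] with y hy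
      rw [← ENNReal.ofReal_mul (pow_nonneg (le_of_lt hy) _)]
      congr 1
      by_cases hyR : y ∈ Set.Ioc (0:ℝ) R
      · rw [Set.indicator_of_mem hyR, Set.indicator_of_mem hyR]
      · rw [Set.indicator_of_notMem hyR, Set.indicator_of_notMem hyR, mul_zero]
    rw [lintegral_congr_ae hcong]
    have hint : IntegrableOn (Set.indicator (Set.Ioc (0:ℝ) R)
        (fun y => y ^ (d - 1 : ℕ) * y ^ (-m))) (Set.Ioi (0:ℝ)) :=
      ((integrable_indicator_iff measurableSet_Ioc).2
        (my_one_dim_integrableOn hd hmd hR)).integrableOn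
    exact hint.setLIntegral_lt_top

lemma my_integral_indicator (hd : 1 ≤ d) (hmd : m < d) {R : ℝ} (hR : 0 < R) :
    ∫ x : E, Set.indicator (Set.Ioc (0:ℝ) R) (fun y => y ^ (-m)) ‖x‖
      = (d * (volume (ball (0:E) 1)).toReal) * (R ^ ((d:ℝ) - m) / ((d:ℝ) - m)) := by
  haveI := my_nontrivial hd
  rw [MeasureTheory.integral_fun_norm_addHaar volume
    (fun y => Set.indicator (Set.Ioc (0:ℝ) R) (fun y => y ^ (-m)) y)]
  have hfin : Module.finrank ℝ (EuclideanSpace ℝ (Fin d)) = d := finrank_euclideanSpace_fin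
  rw [hfin, nsmul_eq_mul, smul_eq_mul]
  have hinner : (∫ y in Set.Ioi (0:ℝ), y ^ (d - 1 : ℕ) •
      Set.indicator (Set.Ioc (0:ℝ) R) (fun y => y ^ (-m)) y)
      = R ^ ((d:ℝ) - m) / ((d:ℝ) - m) := by
    have hfun : (fun y : ℝ => y ^ (d - 1 : ℕ) •
        Set.indicator (Set.Ioc (0:ℝ) R) (fun y => y ^ (-m)) y)
        = Set.indicator (Set.Ioc (0:ℝ) R) (fun y => y ^ (d - 1 : ℕ) * y ^ (-m)) := by
      funext y
      by_cases hyR : y ∈ Set.Ioc (0:ℝ) R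
      · rw [Set.indicator_of_mem hyR, Set.indicator_of_mem hyR, smul_eq_mul]
      · rw [Set.indicator_of_notMem hyR, Set.indicator_of_notMem hyR, smul_zero]
    rw [hfun, setIntegral_indicator measurableSet_Ioc,
      Set.inter_eq_self_of_subset_right Set.Ioc_subset_Ioi_self]
    exact my_one_dim_integral hd hmd hR
  rw [hinner, measureReal_def]
  ring

end euclid

section euclid2

variable {d : ℕ} {m : ℝ}

lemma my_integrableOn_closedBall_zero (hd : 1 ≤ d) (hm : 0 < m) (hmd : m < (d:ℝ)) {R : ℝ}
    (hR : 0 < R) :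
    IntegrableOn (fun v : EuclideanSpace ℝ (Fin d) => ‖v‖ ^ (-m)) (closedBall 0 R) := by
  have h := my_integrable_indicator (m := m) hd hmd hR
  rw [funext (my_indicator_eq hm hR)] at h
  exact (integrable_indicator_iff measurableSet_closedBall).1 h

lemma my_integral_closedBall_zero (hd : 1 ≤ d) (hm : 0 < m) (hmd : m < (d:ℝ)) {R : ℝ}
    (hR : 0 < R) :
    ∫ v in closedBall (0 : EuclideanSpace ℝ (Fin d)) R, ‖v‖ ^ (-m)
      = (d * (volume (ball (0 : EuclideanSpace ℝ (Fin d)) 1)).toReal) *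
        (R ^ ((d:ℝ) - m) / ((d:ℝ) - m)) := by
  rw [← MeasureTheory.integral_indicator measurableSet_closedBall,
    ← funext (my_indicator_eq (m := m) hm hR)]
  exact my_integral_indicator hd hmd hR

lemma my_integrableOn_closedBall (hd : 1 ≤ d) (hmd : m < (d:ℝ))
    (v₀ : EuclideanSpace ℝ (Fin d)) {r : ℝ} (hr : 0 < r) :
    IntegrableOn (fun v : EuclideanSpace ℝ (Fin d) => ‖v‖ ^ (-m)) (closedBall v₀ r) := by
  rcases le_or_gt m 0 with hm | hm
  · have hcont : Continuous (fun v : EuclideanSpace ℝ (Fin d) => ‖v‖ ^ (-m)) :=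
      continuous_norm.rpow_const (fun v => Or.inr (by linarith))
    exact hcont.continuousOn.integrableOn_compact (isCompact_closedBall _ _)
  · have hsub : closedBall v₀ r ⊆ closedBall (0 : EuclideanSpace ℝ (Fin d)) (‖v₀‖ + r) := by
      apply closedBall_subset_closedBall'
      rw [dist_zero_right]
      linarith
    exact (my_integrableOn_closedBall_zero hd hm hmd
      (by positivity : (0:ℝ) < ‖v₀‖ + r)).mono_set hsub

end euclid2

set_option maxHeartbeats 1000000 in
/-- For `m < d`, the average of `‖v‖^(-m)` over `B_r(v₀)` is comparable to
`(max{‖v₀‖, 2r})^(-m)`, with comparison constants depending only on `m` and `d`. -/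
theorem average_power_weight_comparable (d : ℕ) (hd : 1 ≤ d) (m : ℝ) (hmd : m < d) :
    ∃ c C : ℝ, 0 < c ∧ 0 < C ∧
      ∀ (v₀ : EuclideanSpace ℝ (Fin d)) (r : ℝ), 0 < r →
        c * (max ‖v₀‖ (2 * r)) ^ (-m) ≤ (⨍ v in closedBall v₀ r, ‖v‖ ^ (-m)) ∧
        (⨍ v in closedBall v₀ r, ‖v‖ ^ (-m)) ≤ C * (max ‖v₀‖ (2 * r)) ^ (-m) := by
  haveI := my_nontrivial hd
  have hd0 : (0:ℝ) < d := by exact_mod_cast Nat.pos_of_ne_zero (by omega)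
  have hdm : (0:ℝ) < (d:ℝ) - m := by linarith
  set ω : ℝ := (volume (ball (0:EuclideanSpace ℝ (Fin d)) 1)).toReal with hω_def
  have hω : 0 < ω :=
    ENNReal.toReal_pos (measure_ball_pos volume _ one_pos).ne' measure_ball_lt_top.ne
  have h4m : (0:ℝ) < (4:ℝ) ^ m := Real.rpow_pos_of_pos (by norm_num) _
  have h2m : (0:ℝ) < (2:ℝ) ^ (-m) := Real.rpow_pos_of_pos (by norm_num) _
  have h3dm : (0:ℝ) < (3:ℝ) ^ ((d:ℝ) - m) := Real.rpow_pos_of_pos (by norm_num) _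
  have h2pm : (0:ℝ) < (2:ℝ) ^ m := Real.rpow_pos_of_pos (by norm_num) _
  set c : ℝ := (1/2) * min ((4:ℝ) ^ m) ((2:ℝ) ^ (-m)) with hc_def
  set C₁ : ℝ := (d * (3:ℝ) ^ ((d:ℝ) - m) * (2:ℝ) ^ m) / ((d:ℝ) - m) with hC1_def
  set C₂ : ℝ := max ((4:ℝ) ^ m) ((2:ℝ) ^ (-m)) with hC2_def
  have hc : 0 < c := by
    apply mul_pos (by norm_num)
    exact lt_min h4m h2m
  have hC1 : 0 < C₁ := by
    apply div_pos _ hdm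
    positivity
  refine ⟨c, max C₁ C₂, hc, lt_max_of_lt_left hC1, ?_⟩
  intro v₀ r hr
  set R : ℝ := max ‖v₀‖ (2*r) with hR_def
  have hRpos : 0 < R := lt_max_of_lt_right (by linarith)
  have hv₀R : ‖v₀‖ ≤ R := le_max_left _ _
  have hrR : 2*r ≤ R := le_max_right _ _
  have hRm : 0 < R ^ (-m) := Real.rpow_pos_of_pos hRpos _
  set B := closedBall v₀ r with hB_def
  have hμB_fin : volume B ≠ ⊤ := measure_closedBall_lt_top.ne
  have hμB_pos : 0 < (volume B).toReal :=
    ENNReal.toReal_pos (measure_closedBall_pos volume _ hr).ne' hμB_fin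
  have hμB : (volume B).toReal = r^d * ω := by
    rw [hB_def, Measure.addHaar_closedBall volume v₀ hr.le, ENNReal.toReal_mul,
      ENNReal.toReal_ofReal (by positivity), finrank_euclideanSpace_fin]
  have hint : IntegrableOn (fun v => ‖v‖ ^ (-m)) B volume :=
    my_integrableOn_closedBall hd hmd v₀ hr
  have hfnn : ∀ v : EuclideanSpace ℝ (Fin d), 0 ≤ ‖v‖ ^ (-m) :=
    fun v => Real.rpow_nonneg (norm_nonneg v) _
  have hnorm_ub : ∀ v ∈ B, ‖v‖ ≤ 2 * R := by
    intro v hv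
    have h1 : dist v v₀ ≤ r := mem_closedBall.1 hv
    have h2 : ‖v‖ ≤ dist v v₀ + ‖v₀‖ := by
      simpa [dist_zero_right] using dist_triangle v v₀ 0
    linarith
  have hlow2 : 2*r ≤ ‖v₀‖ → ∀ v ∈ B, R/4 ≤ ‖v‖ := by
    intro h2 v hv
    have hReq : R = ‖v₀‖ := max_eq_left h2
    have h1 : dist v v₀ ≤ r := mem_closedBall.1 hv
    have h3 : ‖v₀‖ - ‖v‖ ≤ ‖v₀ - v‖ := norm_sub_norm_le v₀ v
    have h4 : ‖v₀ - v‖ = dist v v₀ := by rw [← dist_eq_norm, dist_comm]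
    rw [hReq]
    linarith
  have havg : (⨍ v in B, ‖v‖ ^ (-m)) = (volume B).toReal⁻¹ * ∫ v in B, ‖v‖ ^ (-m) := by
    rw [setAverage_eq, smul_eq_mul, measureReal_def]
  have hA_eq : (R/4) ^ (-m) = (4:ℝ) ^ m * R ^ (-m) := by
    rw [Real.div_rpow hRpos.le (by norm_num), Real.rpow_neg (by norm_num : (0:ℝ) ≤ 4)]
    field_simp
  have hB_eq : (2*R) ^ (-m) = (2:ℝ) ^ (-m) * R ^ (-m) := Real.mul_rpow (by norm_num) hRpos.le
  constructor
  · -- LOWER BOUND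
    obtain ⟨s, hsB, hsmeas, hslb, hsmge⟩ :
        ∃ s, s ⊆ B ∧ MeasurableSet s ∧ (∀ v ∈ s, R/4 ≤ ‖v‖) ∧
          (volume B).toReal ≤ 2 * (volume s).toReal := by
      rcases le_total (2*r) ‖v₀‖ with hcase | hcase
      · exact ⟨B, subset_rfl, measurableSet_closedBall, hlow2 hcase, by linarith⟩
      · have hReq : R = 2*r := max_eq_right hcase
        set t := ball (0:EuclideanSpace ℝ (Fin d)) (R/4) with ht_def
        refine ⟨B \ t, Set.diff_subset, measurableSet_closedBall.diff measurableSet_ball,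
          ?_, ?_⟩
        · intro v hv
          have h5 := hv.2
          simp only [ht_def, mem_ball, dist_zero_right, not_lt] at h5
          exact h5
        · have hfin1 : volume (B \ t) ≠ ⊤ :=
            (lt_of_le_of_lt (measure_mono Set.diff_subset) measure_closedBall_lt_top).ne
          have hfin2 : volume t ≠ ⊤ := measure_ball_lt_top.ne
          have hBsub' : volume B ≤ volume (B \ t) + volume t :=
            le_trans (measure_mono (Set.subset_diff_union B t)) (measure_union_le _ _)
          have hsplit : (volume B).toReal ≤ (volume (B \ t)).toReal + (volume t).toReal := by
            rw [← ENNReal.toReal_add hfin1 hfin2]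
            exact ENNReal.toReal_mono (ENNReal.add_ne_top.2 ⟨hfin1, hfin2⟩) hBsub'
          have hballval : (volume t).toReal = (r/2)^d * ω := by
            have hR4 : R/4 = r/2 := by rw [hReq]; ring
            rw [ht_def, hR4, Measure.addHaar_ball volume 0 (by positivity : (0:ℝ) ≤ r/2),
              ENNReal.toReal_mul, ENNReal.toReal_ofReal (by positivity),
              finrank_euclideanSpace_fin]
          have h2d : (2:ℝ) ≤ 2^d := by
            calc (2:ℝ) = 2^1 := by norm_num
            _ ≤ 2^d := pow_le_pow_right₀ one_le_two hd
          have hhalf : (volume t).toReal ≤ (1/2) * (volume B).toReal := by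
            rw [hballval, hμB, div_pow]
            have h6 : r^d/(2:ℝ)^d ≤ r^d/2 := by
              gcongr
            nlinarith [hω.le]
          linarith
    have hμs_fin : volume s ≠ ⊤ :=
      (lt_of_le_of_lt (measure_mono hsB) measure_closedBall_lt_top).ne
    have hmin_pos : 0 < min ((R/4)^(-m)) ((2*R)^(-m)) :=
      lt_min (Real.rpow_pos_of_pos (by positivity) _) (Real.rpow_pos_of_pos (by positivity) _)
    have key1 : min ((R/4)^(-m)) ((2*R)^(-m)) * (volume s).toReal ≤ ∫ v in s, ‖v‖^(-m) :=
      by have := setIntegral_ge_of_const_le_real hsmeas hμs_fin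
           (fun v hv => my_min_rpow_le (by positivity) (hslb v hv) (hnorm_ub v (hsB hv)))
           (hint.mono_set hsB)
         rwa [measureReal_def] at this
    have key2 : ∫ v in s, ‖v‖^(-m) ≤ ∫ v in B, ‖v‖^(-m) :=
      setIntegral_mono_set hint (Filter.Eventually.of_forall (fun v => hfnn v))
        (HasSubset.Subset.eventuallyLE hsB)
    rw [havg]
    calc c * R^(-m) = (1/2) * (min ((4:ℝ)^m) ((2:ℝ)^(-m)) * R^(-m)) := by
          rw [hc_def]; ring
      _ = (1/2) * min ((R/4)^(-m)) ((2*R)^(-m)) := by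
          rw [min_mul_of_nonneg _ _ hRm.le, ← hA_eq, ← hB_eq]
      _ ≤ (volume B).toReal⁻¹ * ∫ v in B, ‖v‖^(-m) := by
          rw [inv_mul_eq_div, le_div_iff₀ hμB_pos]
          have k3 := mul_le_mul_of_nonneg_left hsmge hmin_pos.le
          have k4 : min ((R/4)^(-m)) ((2*R)^(-m)) * (2 * (volume s).toReal)
              = 2 * (min ((R/4)^(-m)) ((2*R)^(-m)) * (volume s).toReal) := by ring
          linarith
  · -- UPPER BOUND
    rw [havg]
    by_cases hcase : (2*r ≤ ‖v₀‖ ∨ m ≤ 0)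
    · have hub : ∀ v ∈ B, ‖v‖^(-m) ≤ max ((R/4)^(-m)) ((2*R)^(-m)) := by
        intro v hv
        apply my_rpow_le_max (by positivity) (norm_nonneg v) (hnorm_ub v hv)
        rcases hcase with hc2 | hm0
        · exact Or.inr (hlow2 hc2 v hv)
        · exact Or.inl (by linarith)
      have h1 : ∫ v in B, ‖v‖^(-m)
          ≤ (volume B).toReal * (max ((R/4)^(-m)) ((2*R)^(-m))) := by
        have h2 := setIntegral_mono_on hint
          (integrableOn_const measure_closedBall_lt_top.ne) measurableSet_closedBall hub
        rwa [setIntegral_const, smul_eq_mul] at h2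
      calc (volume B).toReal⁻¹ * ∫ v in B, ‖v‖^(-m)
          ≤ (volume B).toReal⁻¹ * ((volume B).toReal * (max ((R/4)^(-m)) ((2*R)^(-m)))) :=
            mul_le_mul_of_nonneg_left h1 (inv_nonneg.2 hμB_pos.le)
        _ = max ((R/4)^(-m)) ((2*R)^(-m)) := by
            field_simp
        _ = C₂ * R^(-m) := by
            rw [hA_eq, hB_eq, hC2_def, max_mul_of_nonneg _ _ hRm.le]
        _ ≤ max C₁ C₂ * R^(-m) :=
            mul_le_mul_of_nonneg_right (le_max_right _ _) hRm.le
    · push_neg at hcase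
      obtain ⟨hv₀2r, hm0⟩ := hcase
      have hReq : R = 2*r := max_eq_right (le_of_lt hv₀2r)
      have h3r : (0:ℝ) < 3*r := by linarith
      have hsub : B ⊆ closedBall (0:EuclideanSpace ℝ (Fin d)) (3*r) := by
        apply closedBall_subset_closedBall'
        rw [dist_zero_right]
        linarith
      have h1 : ∫ v in B, ‖v‖^(-m)
          ≤ ∫ v in closedBall (0:EuclideanSpace ℝ (Fin d)) (3*r), ‖v‖^(-m) :=
        setIntegral_mono_set (my_integrableOn_closedBall_zero hd hm0 hmd h3r)
          (Filter.Eventually.of_forall (fun v => hfnn v)) (HasSubset.Subset.eventuallyLE hsub)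
      have h2 : ∫ v in closedBall (0:EuclideanSpace ℝ (Fin d)) (3*r), ‖v‖^(-m)
          = (d * ω) * ((3*r)^((d:ℝ)-m)/((d:ℝ)-m)) := my_integral_closedBall_zero hd hm0 hmd h3r
      have e4 : (2:ℝ)^m * (2:ℝ)^(-m) = 1 := by
        rw [← Real.rpow_add (by norm_num : (0:ℝ) < 2)]
        simp
      have e5 : r^(-m) = (2:ℝ)^m * (2*r)^(-m) := by
        rw [Real.mul_rpow (by norm_num : (0:ℝ) ≤ 2) hr.le, ← mul_assoc, e4, one_mul]
      have hval : (volume B).toReal⁻¹ * ((d * ω) * ((3*r)^((d:ℝ)-m)/((d:ℝ)-m)))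
          = C₁ * R^(-m) := by
        have e1 : (3*r)^((d:ℝ)-m) = (3:ℝ)^((d:ℝ)-m) * r^((d:ℝ)-m) :=
          Real.mul_rpow (by norm_num) hr.le
        have e2 : r^((d:ℝ)-m) = r^(d:ℕ) * r^(-m) := by
          rw [← Real.rpow_natCast r d, ← Real.rpow_add hr]
          ring_nf
        rw [hμB, hReq, e1, e2, e5, hC1_def]
        have hrd : (0:ℝ) < r^(d:ℕ) := by positivity
        have h2rm : (0:ℝ) < (2*r)^(-m) := Real.rpow_pos_of_pos (by linarith) _
        field_simp
      calc (volume B).toReal⁻¹ * ∫ v in B, ‖v‖^(-m)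
          ≤ (volume B).toReal⁻¹ * ((d * ω) * ((3*r)^((d:ℝ)-m)/((d:ℝ)-m))) := by
            rw [← h2]
            exact mul_le_mul_of_nonneg_left h1 (inv_nonneg.2 hμB_pos.le)
        _ = C₁ * R^(-m) := hval
        _ ≤ max C₁ C₂ * R^(-m) := mul_le_mul_of_nonneg_right (le_max_left _ _) hRm.le
end

section
/- Let d ≥ 3, γ ∈ [−d, −2], and m ∈ (0, d/|2+γ|). There is a constant C depending only on d, γ, m such that for every nonnegative f ∈ L¹(ℝ^d) and every ball B ⊂ ℝ^d, the function a(v) = ∫_{ℝ^d} f(w)|v−w|^{2+γ} dw satisfies ((1/|B|)∫_B a^m dv)^{1/m} ≤ C·(1/|B|)∫_B a dv. -/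
open MeasureTheory Metric Set ENNReal

section LandauAux

lemma landau_I1_lt_top (d : ℕ) (hd : 0 < d) {p : ℝ} (hp1 : -(d:ℝ) < p) (hp2 : p ≤ 0) :
    ∫⁻ v in closedBall (0 : EuclideanSpace ℝ (Fin d)) 1, ENNReal.ofReal (‖v‖ ^ p) < ∞ := by
  haveI : Nonempty (Fin d) := ⟨⟨0, hd⟩⟩
  set μ : Measure (EuclideanSpace ℝ (Fin d)) := volume
  set x : ℝ := (1/2 : ℝ) with hx
  have hx0 : (0:ℝ) < x := by norm_num [hx]
  have hx1 : x < 1 := by norm_num [hx]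
  set A : ℕ → Set (EuclideanSpace ℝ (Fin d)) :=
    fun n => closedBall 0 (x ^ n) \ closedBall 0 (x ^ (n+1)) with hA
  have hsub : closedBall (0 : EuclideanSpace ℝ (Fin d)) 1 ⊆ {0} ∪ ⋃ n, A n := by
    intro v hv
    rcases eq_or_ne v 0 with rfl | hv0
    · exact Or.inl rfl
    right
    have hvnorm : 0 < ‖v‖ := norm_pos_iff.2 hv0
    have hvle : ‖v‖ ≤ 1 := by simpa using mem_closedBall_zero_iff.1 hv
    have hex : ∃ n : ℕ, x ^ n < ‖v‖ := exists_pow_lt_of_lt_one hvnorm hx1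
    classical
    set n₀ := Nat.find hex with hn₀
    have hn₀lt : x ^ n₀ < ‖v‖ := Nat.find_spec hex
    have hn₀pos : 0 < n₀ := by
      rcases Nat.eq_zero_or_pos n₀ with h | h
      · exfalso; rw [h] at hn₀lt; simp at hn₀lt; linarith
      · exact h
    refine mem_iUnion.2 ⟨n₀ - 1, ?_, ?_⟩
    · have : ¬ x ^ (n₀ - 1) < ‖v‖ := Nat.find_min hex (Nat.sub_lt hn₀pos one_pos)
      exact mem_closedBall_zero_iff.2 (not_lt.1 this)
    · intro hmem
      have : ‖v‖ ≤ x ^ (n₀ - 1 + 1) := mem_closedBall_zero_iff.1 hmem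
      rw [Nat.sub_add_cancel hn₀pos] at this
      linarith
  calc ∫⁻ v in closedBall (0 : EuclideanSpace ℝ (Fin d)) 1, ENNReal.ofReal (‖v‖ ^ p)
      ≤ ∫⁻ v in {0} ∪ ⋃ n, A n, ENNReal.ofReal (‖v‖ ^ p) ∂μ := lintegral_mono_set hsub
    _ ≤ (∫⁻ v in ({0} : Set (EuclideanSpace ℝ (Fin d))), ENNReal.ofReal (‖v‖ ^ p) ∂μ)
        + ∫⁻ v in ⋃ n, A n, ENNReal.ofReal (‖v‖ ^ p) ∂μ := lintegral_union_le _ _ _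
    _ < ∞ := by
        have h0 : ∫⁻ v in ({0} : Set (EuclideanSpace ℝ (Fin d))),
            ENNReal.ofReal (‖v‖ ^ p) ∂μ = 0 := by
          have : μ ({0} : Set (EuclideanSpace ℝ (Fin d))) = 0 := measure_singleton 0
          exact setLIntegral_measure_zero _ _ this
        rw [h0, zero_add]
        refine lt_of_le_of_lt (lintegral_iUnion_le _ _) ?_
        have hterm : ∀ n : ℕ, ∫⁻ v in A n, ENNReal.ofReal (‖v‖ ^ p) ∂μ
            ≤ ENNReal.ofReal (x ^ p) * μ (closedBall (0 : EuclideanSpace ℝ (Fin d)) 1)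
              * ENNReal.ofReal ((x ^ ((d:ℝ) + p)) ^ n) := by
          intro n
          have hxn1 : (0:ℝ) < x ^ (n+1) := pow_pos hx0 _
          have hbound : ∀ v ∈ A n, ENNReal.ofReal (‖v‖ ^ p)
              ≤ ENNReal.ofReal ((x ^ (n+1)) ^ p) := by
            intro v hv
            have h1 : x ^ (n+1) ≤ ‖v‖ := by
              by_contra h
              exact hv.2 (mem_closedBall_zero_iff.2 (le_of_lt (not_le.1 h)))
            exact ENNReal.ofReal_le_ofReal (Real.rpow_le_rpow_of_nonpos hxn1 h1 hp2)
          calc ∫⁻ v in A n, ENNReal.ofReal (‖v‖ ^ p) ∂μ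
              ≤ ∫⁻ _ in A n, ENNReal.ofReal ((x ^ (n+1)) ^ p) ∂μ :=
                setLIntegral_mono' (measurableSet_closedBall.diff measurableSet_closedBall) hbound
            _ = ENNReal.ofReal ((x ^ (n+1)) ^ p) * μ (A n) := setLIntegral_const _ _
            _ ≤ ENNReal.ofReal ((x ^ (n+1)) ^ p) *
                  μ (closedBall (0 : EuclideanSpace ℝ (Fin d)) (x ^ n)) := by
                gcongr
                exact diff_subset
            _ = ENNReal.ofReal ((x ^ (n+1)) ^ p) *
                  (ENNReal.ofReal ((x ^ n) ^ d) * μ (ball (0 : EuclideanSpace ℝ (Fin d)) 1)) := by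
                rw [Measure.addHaar_closedBall _ _ (le_of_lt (pow_pos hx0 n))]
                rw [finrank_euclideanSpace_fin]
            _ ≤ ENNReal.ofReal (x ^ p) * μ (closedBall (0 : EuclideanSpace ℝ (Fin d)) 1)
                  * ENNReal.ofReal ((x ^ ((d:ℝ) + p)) ^ n) := by
                have key : (x ^ (n+1) : ℝ) ^ p * (x ^ n) ^ d
                    = x ^ p * (x ^ ((d:ℝ) + p)) ^ n := by
                  have e1 : (x ^ (n+1) : ℝ) ^ p = x ^ (((n:ℝ)+1) * p) := by
                    rw [← Real.rpow_natCast x (n+1), ← Real.rpow_mul hx0.le]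
                    push_cast; ring_nf
                  have e2 : ((x ^ n : ℝ)) ^ (d:ℕ) = x ^ (((n*d : ℕ):ℝ)) := by
                    rw [← pow_mul, Real.rpow_natCast]
                  have e3 : ((x ^ ((d:ℝ) + p)) ^ n : ℝ) = x ^ (((d:ℝ)+p) * n) := by
                    rw [← Real.rpow_natCast (x ^ ((d:ℝ)+p)) n, ← Real.rpow_mul hx0.le]
                  rw [e1, e2, e3, ← Real.rpow_add hx0, ← Real.rpow_add hx0]
                  congr 1
                  push_cast; ring
                rw [show ENNReal.ofReal ((x ^ (n+1)) ^ p)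
                      * (ENNReal.ofReal ((x ^ n) ^ d)
                          * μ (ball (0 : EuclideanSpace ℝ (Fin d)) 1))
                    = ENNReal.ofReal ((x ^ (n+1)) ^ p * (x ^ n) ^ d)
                        * μ (ball (0 : EuclideanSpace ℝ (Fin d)) 1) by
                  rw [ENNReal.ofReal_mul (by positivity), mul_assoc]]
                rw [key, ENNReal.ofReal_mul (by positivity), mul_right_comm]
                exact mul_le_mul_left
                  (mul_le_mul_right (measure_mono ball_subset_closedBall) _) _
        refine lt_of_le_of_lt (ENNReal.tsum_le_tsum hterm) ?_
        rw [ENNReal.tsum_mul_left]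
        have hgeo : ∑' n : ℕ, ENNReal.ofReal ((x ^ ((d:ℝ) + p)) ^ n) < ∞ := by
          have : ∀ n : ℕ, ENNReal.ofReal ((x ^ ((d:ℝ) + p)) ^ n)
              = (ENNReal.ofReal (x ^ ((d:ℝ) + p))) ^ n := fun n => by
            rw [ENNReal.ofReal_pow (Real.rpow_nonneg hx0.le _)]
          rw [tsum_congr this, ENNReal.tsum_geometric]
          have hlt : ENNReal.ofReal (x ^ ((d:ℝ) + p)) < 1 := by
            exact ENNReal.ofReal_lt_one.2 (Real.rpow_lt_one hx0.le hx1 (by linarith))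
          exact ENNReal.inv_lt_top.2 (tsub_pos_iff_lt.2 hlt)
        exact ENNReal.mul_lt_top
          (ENNReal.mul_lt_top ENNReal.ofReal_lt_top measure_closedBall_lt_top) hgeo

lemma landau_lint_ball_eq (d : ℕ) {p : ℝ} (w : EuclideanSpace ℝ (Fin d)) {ρ : ℝ} (hρ : 0 < ρ) :
    ∫⁻ v in closedBall w ρ, ENNReal.ofReal (‖v - w‖ ^ p)
      = ENNReal.ofReal (ρ ^ ((d:ℝ) + p)) *
        ∫⁻ v in closedBall (0 : EuclideanSpace ℝ (Fin d)) 1, ENNReal.ofReal (‖v‖ ^ p) := by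
  have step1 : ∫⁻ v in closedBall w ρ, ENNReal.ofReal (‖v - w‖ ^ p)
      = ∫⁻ u in closedBall (0 : EuclideanSpace ℝ (Fin d)) ρ, ENNReal.ofReal (‖u‖ ^ p) := by
    have hmp : MeasurePreserving (fun u : EuclideanSpace ℝ (Fin d) => u + w) volume volume :=
      measurePreserving_add_right volume w
    have hemb : MeasurableEmbedding (fun u : EuclideanSpace ℝ (Fin d) => u + w) :=
      (MeasurableEquiv.addRight w).measurableEmbedding
    have key := hmp.setLIntegral_comp_emb hemb
      (fun v => ENNReal.ofReal (‖v - w‖ ^ p)) (closedBall (0 : EuclideanSpace ℝ (Fin d)) ρ)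
    have himg : (fun u : EuclideanSpace ℝ (Fin d) => u + w) ''
        closedBall (0 : EuclideanSpace ℝ (Fin d)) ρ = closedBall w ρ := by
      ext v
      simp only [mem_image, mem_closedBall_zero_iff, Metric.mem_closedBall, dist_eq_norm,
        sub_zero]
      constructor
      · rintro ⟨u, hu, rfl⟩
        rwa [add_sub_cancel_right]
      · intro hv
        exact ⟨v - w, hv, by abel⟩
    rw [himg] at key
    rw [← key]
    apply lintegral_congr_ae
    filter_upwards with u
    rw [add_sub_cancel_right]
  have step2 : ∫⁻ u in closedBall (0 : EuclideanSpace ℝ (Fin d)) ρ, ENNReal.ofReal (‖u‖ ^ p)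
      = ENNReal.ofReal (ρ ^ (d:ℕ)) * ∫⁻ u in closedBall (0 : EuclideanSpace ℝ (Fin d)) 1,
          ENNReal.ofReal (ρ ^ p * ‖u‖ ^ p) := by
    have hmap : Measure.map (fun u : EuclideanSpace ℝ (Fin d) => ρ • u) volume
        = ENNReal.ofReal |(ρ ^ Module.finrank ℝ (EuclideanSpace ℝ (Fin d)))⁻¹| • volume :=
      Measure.map_addHaar_smul volume hρ.ne'
    have hms : Measurable (fun u : EuclideanSpace ℝ (Fin d) => ρ • u) :=
      (continuous_const_smul ρ).measurable
    have hemb2 : MeasurableEmbedding (fun u : EuclideanSpace ℝ (Fin d) => ρ • u) :=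
      (Homeomorph.smulOfNeZero ρ hρ.ne').measurableEmbedding
    have hpre : (fun u : EuclideanSpace ℝ (Fin d) => ρ • u) ⁻¹'
        closedBall (0 : EuclideanSpace ℝ (Fin d)) ρ
        = closedBall (0 : EuclideanSpace ℝ (Fin d)) 1 := by
      ext u
      simp only [mem_preimage, mem_closedBall_zero_iff, norm_smul, Real.norm_eq_abs,
        abs_of_pos hρ]
      constructor
      · intro h; nlinarith [norm_nonneg u]
      · intro h; nlinarith [norm_nonneg u]
    have key : ∫⁻ u in closedBall (0 : EuclideanSpace ℝ (Fin d)) ρ, ENNReal.ofReal (‖u‖ ^ p)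
          ∂(Measure.map (fun u : EuclideanSpace ℝ (Fin d) => ρ • u) volume)
        = ∫⁻ u in closedBall (0 : EuclideanSpace ℝ (Fin d)) 1,
            ENNReal.ofReal (‖ρ • u‖ ^ p) := by
      rw [Measure.restrict_map hms measurableSet_closedBall, hpre,
        hemb2.lintegral_map]
    rw [hmap, Measure.restrict_smul, lintegral_smul_measure] at key
    have hc : ENNReal.ofReal |(ρ ^ Module.finrank ℝ (EuclideanSpace ℝ (Fin d)))⁻¹|
        = (ENNReal.ofReal (ρ ^ (d:ℕ)))⁻¹ := by
      rw [show Module.finrank ℝ (EuclideanSpace ℝ (Fin d)) = d from finrank_euclideanSpace_fin,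
        abs_of_pos (by positivity), ENNReal.ofReal_inv_of_pos (by positivity)]
    rw [hc] at key
    rw [show ∫⁻ u in closedBall (0 : EuclideanSpace ℝ (Fin d)) 1,
          ENNReal.ofReal (ρ ^ p * ‖u‖ ^ p)
        = ∫⁻ u in closedBall (0 : EuclideanSpace ℝ (Fin d)) 1,
            ENNReal.ofReal (‖ρ • u‖ ^ p) by
      apply lintegral_congr_ae
      filter_upwards with u
      rw [norm_smul, Real.norm_eq_abs, abs_of_pos hρ, Real.mul_rpow hρ.le (norm_nonneg u)]]
    rw [← key, smul_eq_mul, ← mul_assoc, ENNReal.mul_inv_cancel (by simp; positivity) (by simp), one_mul]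
  rw [step1, step2]
  have hsplit : ∫⁻ u in closedBall (0 : EuclideanSpace ℝ (Fin d)) 1,
        ENNReal.ofReal (ρ ^ p * ‖u‖ ^ p)
      = ENNReal.ofReal (ρ ^ p) * ∫⁻ u in closedBall (0 : EuclideanSpace ℝ (Fin d)) 1,
          ENNReal.ofReal (‖u‖ ^ p) := by
    rw [← lintegral_const_mul' _ _ ENNReal.ofReal_ne_top]
    apply lintegral_congr_ae
    filter_upwards with u
    rw [ENNReal.ofReal_mul (by positivity)]
  rw [hsplit, ← mul_assoc]
  congr 1
  rw [← ENNReal.ofReal_mul (by positivity)]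
  congr 1
  rw [← Real.rpow_natCast ρ d, ← Real.rpow_add hρ]

lemma landau_rpow_ne_top {x : ℝ≥0∞} (hx0 : x ≠ 0) (hxt : x ≠ ∞) (y : ℝ) : x ^ y ≠ ∞ := by
  rcases le_or_gt 0 y with hy | hy
  · exact (ENNReal.rpow_lt_top_of_nonneg hy hxt).ne
  · rw [← neg_neg y, ENNReal.rpow_neg, ENNReal.inv_ne_top]
    exact (ENNReal.rpow_pos (lt_of_le_of_ne (zero_le) (Ne.symm hx0)) hxt).ne'

lemma landau_rpow_ne_top' {x : ℝ≥0∞} (hx0 : x ≠ 0) (hxt : x ≠ ∞) (y : ℝ) : x ^ y ≠ ∞ := by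
  rcases le_or_gt 0 y with hy | hy
  · exact (ENNReal.rpow_lt_top_of_nonneg hy hxt).ne
  · rw [← neg_neg y, ENNReal.rpow_neg, ENNReal.inv_ne_top]
    exact (ENNReal.rpow_pos (lt_of_le_of_ne (zero_le) (Ne.symm hx0)) hxt).ne'

lemma landau_rpow_ne_zero' {x : ℝ≥0∞} (hx0 : x ≠ 0) (hxt : x ≠ ∞) (y : ℝ) : x ^ y ≠ 0 := by
  rcases le_or_gt 0 y with hy | hy
  · exact (ENNReal.rpow_pos (lt_of_le_of_ne (zero_le) (Ne.symm hx0)) hxt).ne'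
  · rw [← neg_neg y, ENNReal.rpow_neg]
    simp only [ne_eq, ENNReal.inv_eq_zero]
    exact landau_rpow_ne_top' hx0 hxt _

lemma landau_help3 {x y ν I R : ℝ≥0∞} (hx0 : x ≠ 0) (hxt : x ≠ ∞) (hy0 : y ≠ 0)
    (hyt : y ≠ ∞) (hν0 : ν ≠ 0) (hνt : ν ≠ ∞) (hIt : I ≠ ∞) (p dd : ℝ) {m : ℝ} (hm : 0 < m) :
    ((x*y) ^ (dd + p*m) * I) ^ ((1:ℝ)/m) * (R / ((x*y) ^ p * (y ^ dd * ν)))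
      = (x ^ dd * I) ^ ((1:ℝ)/m) * ν ^ (-((1:ℝ)/m)) * (R * (y ^ dd * ν) ^ ((1:ℝ)/m - 1)) := by
  have hxy0 : x * y ≠ 0 := mul_ne_zero hx0 hy0
  have hxyt : x * y ≠ ∞ := ENNReal.mul_ne_top hxt hyt
  have hyd0 : y ^ dd * ν ≠ 0 := mul_ne_zero (landau_rpow_ne_zero' hy0 hyt _) hν0
  have hydt : y ^ dd * ν ≠ ∞ := ENNReal.mul_ne_top (landau_rpow_ne_top' hy0 hyt _) hνt
  have hden0 : (x*y) ^ p * (y ^ dd * ν) ≠ 0 := mul_ne_zero (landau_rpow_ne_zero' hxy0 hxyt _) hyd0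
  have hdent : (x*y) ^ p * (y ^ dd * ν) ≠ ∞ :=
    ENNReal.mul_ne_top (landau_rpow_ne_top' hxy0 hxyt _) hydt
  rcases eq_or_ne I 0 with rfl | hI0
  · have hz : (0:ℝ≥0∞) ^ (m⁻¹) = 0 := ENNReal.zero_rpow_of_pos (by positivity)
    simp [hz, one_div]
  rcases eq_or_ne R 0 with rfl | hR0
  · simp [ENNReal.zero_div]
  rcases eq_or_ne R ∞ with rfl | hRt
  · have h1 : ((x*y) ^ (dd + p*m) * I) ^ ((1:ℝ)/m)
        * ((⊤:ℝ≥0∞) / ((x*y) ^ p * (y ^ dd * ν))) = ⊤ := by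
      rw [ENNReal.top_div_of_ne_top hdent, ENNReal.mul_top]
      exact landau_rpow_ne_zero'
        (mul_ne_zero (landau_rpow_ne_zero' hxy0 hxyt _) hI0)
        (ENNReal.mul_ne_top (landau_rpow_ne_top' hxy0 hxyt _) hIt) _
    have h2 : (x ^ dd * I) ^ ((1:ℝ)/m) * ν ^ (-((1:ℝ)/m))
        * ((⊤:ℝ≥0∞) * (y ^ dd * ν) ^ ((1:ℝ)/m - 1)) = ⊤ := by
      rw [ENNReal.top_mul (landau_rpow_ne_zero' hyd0 hydt _), ENNReal.mul_top]
      exact mul_ne_zero (landau_rpow_ne_zero'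
        (mul_ne_zero (landau_rpow_ne_zero' hx0 hxt _) hI0)
        (ENNReal.mul_ne_top (landau_rpow_ne_top' hx0 hxt _) hIt) _)
        (landau_rpow_ne_zero' hν0 hνt _)
    rw [h1, h2]
  · -- generic case: all atoms in (0,∞); pass to `toReal`
    have hLt : ((x*y) ^ (dd + p*m) * I) ^ ((1:ℝ)/m)
        * (R / ((x*y) ^ p * (y ^ dd * ν))) ≠ ∞ := by
      apply ENNReal.mul_ne_top
        (landau_rpow_ne_top'
          (mul_ne_zero (landau_rpow_ne_zero' hxy0 hxyt _) hI0)
          (ENNReal.mul_ne_top (landau_rpow_ne_top' hxy0 hxyt _) hIt) _)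
      exact (ENNReal.div_lt_top hRt hden0).ne
    have hRtt : (x ^ dd * I) ^ ((1:ℝ)/m) * ν ^ (-((1:ℝ)/m))
        * (R * (y ^ dd * ν) ^ ((1:ℝ)/m - 1)) ≠ ∞ := by
      apply ENNReal.mul_ne_top (ENNReal.mul_ne_top
        (landau_rpow_ne_top'
          (mul_ne_zero (landau_rpow_ne_zero' hx0 hxt _) hI0)
          (ENNReal.mul_ne_top (landau_rpow_ne_top' hx0 hxt _) hIt) _)
        (landau_rpow_ne_top' hν0 hνt _))
      exact ENNReal.mul_ne_top hRt (landau_rpow_ne_top' hyd0 hydt _)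
    rw [← ENNReal.toReal_eq_toReal_iff' hLt hRtt]
    simp only [ENNReal.toReal_mul, ENNReal.toReal_div, ← ENNReal.toReal_rpow]
    have hxr : 0 < x.toReal := ENNReal.toReal_pos hx0 hxt
    have hyr : 0 < y.toReal := ENNReal.toReal_pos hy0 hyt
    have hνr : 0 < ν.toReal := ENNReal.toReal_pos hν0 hνt
    have hIr : 0 < I.toReal := ENNReal.toReal_pos hI0 hIt
    have hRr : 0 < R.toReal := ENNReal.toReal_pos hR0 hRt
    set a := x.toReal
    set b := y.toReal
    set c := ν.toReal
    set i := I.toReal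
    set s := R.toReal
    have h1 : (0:ℝ) < (a*b) ^ (dd+p*m) * i := by positivity
    have h2 : (0:ℝ) < a ^ dd * i := by positivity
    have h3 : (0:ℝ) < b ^ dd * c := by positivity
    have hL0 : (0:ℝ) < ((a*b) ^ (dd + p*m) * i) ^ ((1:ℝ)/m)
        * (s / ((a*b) ^ p * (b ^ dd * c))) := by positivity
    have hR0' : (0:ℝ) < (a ^ dd * i) ^ ((1:ℝ)/m) * c ^ (-((1:ℝ)/m))
        * (s * (b ^ dd * c) ^ ((1:ℝ)/m - 1)) := by positivity
    rw [← Real.exp_log hL0, ← Real.exp_log hR0']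
    congr 1
    have hpab : (0:ℝ) < a * b := by positivity
    have hP1 : (0:ℝ) < ((a*b) ^ (dd + p*m) * i) ^ ((1:ℝ)/m) := by positivity
    have hP2 : (0:ℝ) < (a*b) ^ (-p) := by positivity
    have hQ1 : (0:ℝ) < (a ^ dd * i) ^ ((1:ℝ)/m) := by positivity
    have hQ2 : (0:ℝ) < c ^ (-((1:ℝ)/m)) := by positivity
    have hQ3 : (0:ℝ) < (b ^ dd * c) ^ ((1:ℝ)/m - 1) := by positivity
    have hne1 : ((a*b) ^ (dd + p*m) * i) ^ ((1:ℝ)/m) ≠ 0 := ne_of_gt hP1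
    have hne2 : (a*b) ^ (-p) ≠ 0 := ne_of_gt hP2
    have hne3 : (a ^ dd * i) ^ ((1:ℝ)/m) ≠ 0 := ne_of_gt hQ1
    have hne4 : c ^ (-((1:ℝ)/m)) ≠ 0 := ne_of_gt hQ2
    have hne5 : (b ^ dd * c) ^ ((1:ℝ)/m - 1) ≠ 0 := ne_of_gt hQ3
    have hne6 : s ≠ 0 := ne_of_gt hRr
    have hne7 : b ^ dd * c ≠ 0 := ne_of_gt h3
    have hne8 : a ≠ 0 := ne_of_gt hxr
    have hne9 : b ≠ 0 := ne_of_gt hyr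
    have hne10 : c ≠ 0 := ne_of_gt hνr
    have hne11 : i ≠ 0 := ne_of_gt hIr
    have hne12 : a * b ≠ 0 := ne_of_gt hpab
    have hne13 : (a*b) ^ (dd + p*m) ≠ 0 := ne_of_gt (by positivity)
    have hne14 : a ^ dd ≠ 0 := ne_of_gt (by positivity)
    have hne15 : b ^ dd ≠ 0 := ne_of_gt (by positivity)
    rw [Real.log_mul hne1 (by positivity),
      Real.log_div hne6 (by positivity), Real.log_mul (by positivity) hne7,
      Real.log_mul (mul_ne_zero hne3 hne4) (mul_ne_zero hne6 hne5),
      Real.log_mul hne3 hne4, Real.log_mul hne6 hne5,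
      Real.log_rpow h1, Real.log_rpow hpab, Real.log_rpow h2, Real.log_rpow hνr,
      Real.log_rpow h3, Real.log_mul hne13 hne11, Real.log_mul hne14 hne11,
      Real.log_mul hne15 hne10, Real.log_rpow hpab, Real.log_rpow hxr, Real.log_rpow hyr,
      Real.log_mul hne8 hne9]
    field_simp
    ring

lemma landau_help1 (c R D : ℝ≥0∞) (hD0 : D ≠ 0) (hDt : D ≠ ∞) {m : ℝ} (hm : 0 < m) :
    ((c * R / D) ^ m * D) ^ ((1:ℝ)/m) = c * (R * D ^ ((1:ℝ)/m - 1)) := by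
  rw [ENNReal.mul_rpow_of_nonneg _ _ (by positivity), ← ENNReal.rpow_mul,
    mul_one_div_cancel hm.ne', ENNReal.rpow_one, div_eq_mul_inv,
    ← ENNReal.rpow_neg_one D, mul_assoc, ← ENNReal.rpow_add _ _ hD0 hDt,
    show (-1:ℝ) + 1/m = 1/m - 1 from by ring, mul_assoc]

lemma landau_help2 (K R D : ℝ≥0∞) (hD0 : D ≠ 0) (hDt : D ≠ ∞) {m : ℝ} (hm : 0 < m) :
    (K * (R * D ^ ((1:ℝ)/m - 1))) ^ m = K ^ m * R ^ m * D ^ ((1:ℝ) - m) := by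
  rw [ENNReal.mul_rpow_of_nonneg _ _ hm.le, ENNReal.mul_rpow_of_nonneg _ _ hm.le,
    ← ENNReal.rpow_mul, show ((1:ℝ)/m - 1) * m = 1 - m from by field_simp, mul_assoc]

end LandauAux

set_option maxHeartbeats 2000000 in
/-- Reverse Hölder inequality for the Landau coefficient `a_{f,γ}(v) = ∫ f(w)‖v-w‖^{2+γ} dw`:
for `d ≥ 3`, `γ ∈ [-d,-2]` and `m ∈ (0, d/|2+γ|)` there is `C = C(d,γ,m)` such that
`(⨍_B a^m)^{1/m} ≤ C ⨍_B a` for every nonnegative `f ∈ L¹` and every ball `B`. -/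
theorem landau_a_reverse_holder (d : ℕ) (hd : 3 ≤ d) (γ m : ℝ)
    (hγ₁ : -(d : ℝ) ≤ γ) (hγ₂ : γ ≤ -2) (hm0 : 0 < m) (hmd : m * |2 + γ| < d) :
    ∃ C : ℝ, 0 < C ∧
      ∀ f : EuclideanSpace ℝ (Fin d) → ℝ, (∀ v, 0 ≤ f v) → Integrable f →
        ∀ (v₀ : EuclideanSpace ℝ (Fin d)) (r : ℝ), 0 < r →
          (⨍ v in closedBall v₀ r, (∫ w, f w * ‖v - w‖ ^ (2 + γ)) ^ m) ^ (1 / m) ≤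
            C * ⨍ v in closedBall v₀ r, ∫ w, f w * ‖v - w‖ ^ (2 + γ) := by
  classical
  have hd0 : 0 < d := by omega
  haveI : Nonempty (Fin d) := ⟨⟨0, hd0⟩⟩
  set p : ℝ := 2 + γ with hp
  have hp2 : p ≤ 0 := by simp only [hp]; linarith
  have hp1 : -(d:ℝ) < p := by
    have h3 : (3:ℝ) ≤ d := by exact_mod_cast hd
    simp only [hp]; linarith
  have habs : |2 + γ| = -p := by rw [abs_of_nonpos (by linarith)]
  have hpm1 : -(d:ℝ) < p * m := by
    rw [habs] at hmd
    nlinarith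
  have hpm2 : p * m ≤ 0 := mul_nonpos_iff.2 (Or.inr ⟨hp2, hm0.le⟩)
  -- kernel measurability (as a function of (v, w))
  have hknorm : Measurable (fun q : EuclideanSpace ℝ (Fin d) × EuclideanSpace ℝ (Fin d) =>
      ‖q.1 - q.2‖) := (measurable_fst.sub measurable_snd).norm
  -- the core `ENNReal` estimate
  obtain ⟨K, hK0, hKtop, hK⟩ : ∃ K : ℝ≥0∞, K ≠ 0 ∧ K ≠ ∞ ∧
      ∀ g : EuclideanSpace ℝ (Fin d) → ℝ, Measurable g → (∀ w, 0 ≤ g w) → Integrable g →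
      ∀ (v₀ : EuclideanSpace ℝ (Fin d)) (r : ℝ), 0 < r →
      ∫⁻ v in closedBall v₀ r,
          (∫⁻ w, ENNReal.ofReal (g w) * ENNReal.ofReal (‖v - w‖ ^ p)) ^ m
        ≤ K ^ m * (∫⁻ v in closedBall v₀ r,
            ∫⁻ w, ENNReal.ofReal (g w) * ENNReal.ofReal (‖v - w‖ ^ p)) ^ m
          * volume (closedBall v₀ r) ^ ((1:ℝ) - m) := by
    have three_pos : (0:ℝ) < 3 := by norm_num
    rcases le_or_gt m 1 with hm1 | hm1
    · -- case m ≤ 1 : Hölder / power-mean inequality, constant 1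
      refine ⟨1, one_ne_zero, ENNReal.one_ne_top, ?_⟩
      intro g hgm hg0 hgi v₀ r hr
      rw [ENNReal.one_rpow, one_mul]
      rcases eq_or_lt_of_le hm1 with heq | hmlt
      · subst heq
        simp
      · have hker : Measurable (Function.uncurry
            fun (v w : EuclideanSpace ℝ (Fin d)) =>
              ENNReal.ofReal (g w) * ENNReal.ofReal (‖v - w‖ ^ p)) := by
          apply Measurable.fun_mul
          · exact (hgm.comp measurable_snd).ennreal_ofReal
          · have : Measurable (fun q : EuclideanSpace ℝ (Fin d) × EuclideanSpace ℝ (Fin d) =>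
                ‖q.1 - q.2‖ ^ p) := by fun_prop
            exact this.ennreal_ofReal
        have hAmeas : Measurable (fun v : EuclideanSpace ℝ (Fin d) =>
            ∫⁻ w, ENNReal.ofReal (g w) * ENNReal.ofReal (‖v - w‖ ^ p)) :=
          Measurable.lintegral_prod_right hker
        have hconj : ((1:ℝ)/m).HolderConjugate (1/(1-m)) := by
          rw [Real.holderConjugate_iff]
          constructor
          · exact one_lt_one_div hm0 hmlt
          · simp only [one_div, inv_inv]
            ring
        have H := ENNReal.lintegral_mul_le_Lp_mul_Lq (volume.restrict (closedBall v₀ r)) hconj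
          (f := fun v => (∫⁻ w, ENNReal.ofReal (g w) * ENNReal.ofReal (‖v - w‖ ^ p)) ^ m)
          (g := fun _ => (1:ℝ≥0∞))
          (hAmeas.aemeasurable.pow_const m) aemeasurable_const
        simp only [Pi.mul_apply, mul_one, ← ENNReal.rpow_mul,
          mul_one_div_cancel hm0.ne', ENNReal.rpow_one, one_div_one_div,
          ENNReal.one_rpow, lintegral_one, Measure.restrict_apply_univ] at H
        exact H
    · -- case m > 1
      set I1m := ∫⁻ v in closedBall (0 : EuclideanSpace ℝ (Fin d)) 1,
        ENNReal.ofReal (‖v‖ ^ (p*m)) with hI1mdef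
      have hI1mtop : I1m ≠ ∞ := (landau_I1_lt_top d hd0 hpm1 hpm2).ne
      set ν₁ := volume (ball (0 : EuclideanSpace ℝ (Fin d)) 1) with hν₁def
      have hν₁0 : ν₁ ≠ 0 := (measure_ball_pos volume 0 one_pos).ne'
      have hν₁top : ν₁ ≠ ∞ := measure_ball_lt_top.ne
      set τ : ℝ≥0∞ := ENNReal.ofReal 3 with hτdef
      have hτ0 : τ ≠ 0 := by simp [hτdef]
      have hτtop : τ ≠ ∞ := ENNReal.ofReal_ne_top
      set c₂ : ℝ≥0∞ := τ ^ (-p) with hc₂def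
      have hc₂0 : c₂ ≠ 0 := landau_rpow_ne_zero' hτ0 hτtop _
      have hc₂top : c₂ ≠ ∞ := landau_rpow_ne_top' hτ0 hτtop _
      set c₁ : ℝ≥0∞ := (τ ^ (d:ℝ) * I1m) ^ ((1:ℝ)/m) * ν₁ ^ (-((1:ℝ)/m)) with hc₁def
      have hc₁top : c₁ ≠ ∞ := ENNReal.mul_ne_top
        (ENNReal.rpow_lt_top_of_nonneg (by positivity)
          (ENNReal.mul_ne_top (landau_rpow_ne_top' hτ0 hτtop _) hI1mtop)).ne
        (landau_rpow_ne_top' hν₁0 hν₁top _)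
      refine ⟨c₂ + c₁, ?_, ?_, ?_⟩
      · intro hzero
        rw [add_eq_zero] at hzero
        exact hc₂0 hzero.1
      · exact ENNReal.add_ne_top.2 ⟨hc₂top, hc₁top⟩
      intro g hgm hg0 hgi v₀ r hr
      have hr2 : (0:ℝ) < 2*r := by linarith
      have hr3 : (0:ℝ) < 3*r := by linarith
      set ρ : ℝ≥0∞ := ENNReal.ofReal r with hρdef
      have hρ0 : ρ ≠ 0 := by simp only [hρdef, ne_eq, ENNReal.ofReal_eq_zero, not_le]; linarith
      have hρtop : ρ ≠ ∞ := ENNReal.ofReal_ne_top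
      set B := closedBall v₀ r with hB
      set S := closedBall v₀ (2*r) with hS
      set μB := volume B with hμBdef
      have hμB0 : μB ≠ 0 := (measure_closedBall_pos volume v₀ hr).ne'
      have hμBtop : μB ≠ ∞ := measure_closedBall_lt_top.ne
      have hμBeq : μB = ρ ^ (d:ℝ) * ν₁ := by
        rw [hμBdef, hB, Measure.addHaar_closedBall _ _ hr.le, finrank_euclideanSpace_fin,
          hν₁def]
        congr 1
        rw [← Real.rpow_natCast r d, ENNReal.ofReal_rpow_of_pos hr]
      have hker : Measurable (Function.uncurry
          fun (v w : EuclideanSpace ℝ (Fin d)) =>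
            ENNReal.ofReal (g w) * ENNReal.ofReal (‖v - w‖ ^ p)) := by
        apply Measurable.fun_mul
        · exact (hgm.comp measurable_snd).ennreal_ofReal
        · have : Measurable (fun q : EuclideanSpace ℝ (Fin d) × EuclideanSpace ℝ (Fin d) =>
              ‖q.1 - q.2‖ ^ p) := by fun_prop
          exact this.ennreal_ofReal
      set A : EuclideanSpace ℝ (Fin d) → ℝ≥0∞ :=
        fun v => ∫⁻ w, ENNReal.ofReal (g w) * ENNReal.ofReal (‖v - w‖ ^ p) with hA
      set A₁ : EuclideanSpace ℝ (Fin d) → ℝ≥0∞ :=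
        fun v => ∫⁻ w in S, ENNReal.ofReal (g w) * ENNReal.ofReal (‖v - w‖ ^ p) with hA₁
      set A₂ : EuclideanSpace ℝ (Fin d) → ℝ≥0∞ :=
        fun v => ∫⁻ w in Sᶜ, ENNReal.ofReal (g w) * ENNReal.ofReal (‖v - w‖ ^ p) with hA₂
      have hA1meas : Measurable A₁ := Measurable.lintegral_prod_right hker
      have hA2meas : Measurable A₂ := Measurable.lintegral_prod_right hker
      set R := ∫⁻ v in B, A v with hRdef
      have hsplit : ∀ v, A v = A₁ v + A₂ v := fun v =>
        (lintegral_add_compl _ (measurableSet_closedBall : MeasurableSet S)).symm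
      have hA2leA : ∀ v, A₂ v ≤ A v := fun v => by rw [hsplit v]; exact le_add_self
      have hA1leA : ∀ v, A₁ v ≤ A v := fun v => by rw [hsplit v]; exact self_le_add_right _ _
      have hc₂eq : c₂ = ENNReal.ofReal ((3:ℝ) ^ (-p)) := by
        rw [hc₂def, hτdef, ENNReal.ofReal_rpow_of_pos three_pos]
      -- pointwise comparison of the far part
      have hcomp : ∀ v ∈ B, ∀ v' ∈ B, A₂ v ≤ c₂ * A₂ v' := by
        intro v hv v' hv'
        rw [hA₂]
        simp only
        rw [← lintegral_const_mul' _ _ hc₂top]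
        apply setLIntegral_mono' (measurableSet_closedBall : MeasurableSet S).compl
        intro w hw
        have h2r : 2*r < dist w v₀ := by
          by_contra h
          exact hw (mem_closedBall.2 (not_lt.1 h))
        have hdvv₀ : dist v v₀ ≤ r := mem_closedBall.1 hv
        have hdv'v₀ : dist v' v₀ ≤ r := mem_closedBall.1 hv'
        have hvw : r ≤ dist v w := by
          have := dist_triangle w v v₀
          rw [dist_comm w v] at this
          linarith [dist_comm v v₀ ▸ hdvv₀]
        have hv'w0 : r ≤ dist v' w := by
          have := dist_triangle w v' v₀
          rw [dist_comm w v'] at this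
          linarith [dist_comm v' v₀ ▸ hdv'v₀]
        have hv'w : dist v' w ≤ 3 * dist v w := by
          have h1 := dist_triangle v' v w
          have h2 : dist v' v ≤ 2*r := by
            calc dist v' v ≤ dist v' v₀ + dist v₀ v := dist_triangle _ _ _
              _ ≤ r + r := add_le_add hdv'v₀ (by rwa [dist_comm] at hdvv₀)
              _ = 2*r := by ring
          linarith
        have hkey : ‖v - w‖ ^ p ≤ 3 ^ (-p) * ‖v' - w‖ ^ p := by
          rw [← dist_eq_norm, ← dist_eq_norm]
          have h1 : (3 * dist v w) ^ p ≤ dist v' w ^ p :=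
            Real.rpow_le_rpow_of_nonpos (by linarith) hv'w hp2
          have h2 : (3 * dist v w) ^ p = 3 ^ p * dist v w ^ p :=
            Real.mul_rpow (by norm_num) dist_nonneg
          have h3 : (0:ℝ) < 3 ^ p := Real.rpow_pos_of_pos three_pos _
          rw [Real.rpow_neg three_pos.le]
          rw [h2] at h1
          have h4 := mul_le_mul_of_nonneg_left h1 (inv_nonneg.2 h3.le)
          rwa [← mul_assoc, inv_mul_cancel₀ h3.ne', one_mul] at h4
        calc ENNReal.ofReal (g w) * ENNReal.ofReal (‖v - w‖ ^ p)
            ≤ ENNReal.ofReal (g w) * (c₂ * ENNReal.ofReal (‖v' - w‖ ^ p)) := by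
              apply mul_le_mul_right
              rw [hc₂eq, ← ENNReal.ofReal_mul (by positivity)]
              exact ENNReal.ofReal_le_ofReal hkey
          _ = c₂ * (ENNReal.ofReal (g w) * ENNReal.ofReal (‖v' - w‖ ^ p)) := by ring
      have hA2bound : ∀ v ∈ B, A₂ v * μB ≤ c₂ * R := by
        intro v hv
        calc A₂ v * μB = ∫⁻ _ in B, A₂ v := (setLIntegral_const _ _).symm
          _ ≤ ∫⁻ v' in B, c₂ * A₂ v' :=
            setLIntegral_mono' (measurableSet_closedBall : MeasurableSet B)
              (fun v' hv' => hcomp v hv v' hv')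
          _ = c₂ * ∫⁻ v' in B, A₂ v' := lintegral_const_mul' _ _ hc₂top
          _ ≤ c₂ * R := by
              apply mul_le_mul_right
              rw [hRdef]
              exact lintegral_mono fun v' => hA2leA v'
      have hX2 : (∫⁻ v in B, A₂ v ^ m) ^ ((1:ℝ)/m) ≤ c₂ * (R * μB ^ ((1:ℝ)/m - 1)) := by
        have hpt : ∀ v ∈ B, A₂ v ≤ c₂ * R / μB := by
          intro v hv
          rw [ENNReal.le_div_iff_mul_le (Or.inl hμB0) (Or.inl hμBtop)]
          exact hA2bound v hv
        calc (∫⁻ v in B, A₂ v ^ m) ^ ((1:ℝ)/m)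
            ≤ ((c₂ * R / μB) ^ m * μB) ^ ((1:ℝ)/m) := by
              apply ENNReal.rpow_le_rpow _ (by positivity)
              calc ∫⁻ v in B, A₂ v ^ m
                  ≤ ∫⁻ _ in B, (c₂ * R / μB) ^ m :=
                    setLIntegral_mono' (measurableSet_closedBall : MeasurableSet B)
                      (fun v hv => ENNReal.rpow_le_rpow (hpt v hv) hm0.le)
                _ = (c₂ * R / μB) ^ m * μB := setLIntegral_const _ _
          _ = c₂ * (R * μB ^ ((1:ℝ)/m - 1)) := landau_help1 _ _ _ hμB0 hμBtop hm0
      -- the near part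
      set M := ∫⁻ w in S, ENNReal.ofReal (g w) with hMdef
      have hMtop : M ≠ ∞ := by
        apply ne_top_of_le_ne_top _ (setLIntegral_le_lintegral _ _)
        rw [← lt_top_iff_ne_top, ← hasFiniteIntegral_iff_ofReal (ae_of_all _ hg0)]
        exact hgi.2
      -- lower bound for M in terms of R
      have hM : M * (ENNReal.ofReal ((3*r) ^ p) * μB) ≤ R := by
        have hlow : ∀ v ∈ B, ENNReal.ofReal ((3*r) ^ p) * M ≤ A v := by
          intro v hv
          have hne : ∀ᵐ (w : EuclideanSpace ℝ (Fin d)) ∂(volume.restrict S), w ≠ v := by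
            apply ae_restrict_of_ae
            rw [ae_iff]
            have : {w : EuclideanSpace ℝ (Fin d) | ¬ w ≠ v} = {v} := by ext w; simp
            rw [this]
            exact measure_singleton v
          calc ENNReal.ofReal ((3*r) ^ p) * M
              = ∫⁻ w in S, ENNReal.ofReal ((3*r) ^ p) * ENNReal.ofReal (g w) :=
                (lintegral_const_mul' _ _ ENNReal.ofReal_ne_top).symm
            _ ≤ ∫⁻ w in S, ENNReal.ofReal (g w) * ENNReal.ofReal (‖v - w‖ ^ p) := by
                apply lintegral_mono_ae
                have hmem : ∀ᵐ (w : EuclideanSpace ℝ (Fin d)) ∂(volume.restrict S), w ∈ S :=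
                  ae_restrict_mem (measurableSet_closedBall : MeasurableSet S)
                filter_upwards [hne, hmem] with w hwv hwS
                rw [mul_comm]
                apply mul_le_mul_right
                apply ENNReal.ofReal_le_ofReal
                apply Real.rpow_le_rpow_of_nonpos _ _ hp2
                · rw [← dist_eq_norm]
                  exact dist_pos.2 (fun h => hwv h.symm)
                · rw [← dist_eq_norm]
                  calc dist v w ≤ dist v v₀ + dist v₀ w := dist_triangle _ _ _
                    _ ≤ r + 2*r := add_le_add (mem_closedBall.1 hv)
                        (by rw [dist_comm]; exact mem_closedBall.1 hwS)
                    _ = 3*r := by ring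
            _ ≤ A v := setLIntegral_le_lintegral _ _
        calc M * (ENNReal.ofReal ((3*r) ^ p) * μB)
            = (ENNReal.ofReal ((3*r) ^ p) * M) * μB := by ring
          _ = ∫⁻ _ in B, ENNReal.ofReal ((3*r) ^ p) * M := (setLIntegral_const _ _).symm
          _ ≤ ∫⁻ v in B, A v :=
              setLIntegral_mono' (measurableSet_closedBall : MeasurableSet B) hlow
      have hMdiv : M ≤ R / (ENNReal.ofReal ((3*r) ^ p) * μB) := by
        rw [ENNReal.le_div_iff_mul_le
          (Or.inl (mul_ne_zero (ENNReal.ofReal_pos.2 (Real.rpow_pos_of_pos hr3 p)).ne' hμB0))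
          (Or.inl (ENNReal.mul_ne_top ENNReal.ofReal_ne_top hμBtop))]
        exact hM
      -- Hölder bound for the near part
      set P := m/(m-1) with hPdef
      have hm1ne : m - 1 ≠ 0 := by linarith
      have hP0 : P ≠ 0 := by
        rw [hPdef]
        exact div_ne_zero hm0.ne' hm1ne
      have hPpos : (0:ℝ) < P := by
        rw [hPdef]; exact div_pos hm0 (by linarith)
      have hPm : P.HolderConjugate m := by
        rw [Real.holderConjugate_iff]
        constructor
        · rw [hPdef, lt_div_iff₀ (by linarith)]
          linarith
        · rw [hPdef]
          field_simp
          ring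
      have hol2 : ∀ v, A₁ v ^ m
          ≤ M ^ (m - 1) * ∫⁻ w in S,
              ENNReal.ofReal (g w) * ENNReal.ofReal (‖v - w‖ ^ p) ^ m := by
        intro v
        have meas1 : AEMeasurable (fun w => ENNReal.ofReal (g w) ^ ((1:ℝ)/P))
            (volume.restrict S) := (hgm.ennreal_ofReal.aemeasurable).pow_const _
        have measknorm : Measurable (fun w : EuclideanSpace ℝ (Fin d) => ‖v - w‖ ^ p) := by
          fun_prop
        have meas2 : AEMeasurable (fun w => ENNReal.ofReal (g w) ^ ((1:ℝ)/m)
            * ENNReal.ofReal (‖v - w‖ ^ p)) (volume.restrict S) :=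
          ((hgm.ennreal_ofReal.aemeasurable).pow_const _).mul
            (measknorm.ennreal_ofReal.aemeasurable)
        have H := ENNReal.lintegral_mul_le_Lp_mul_Lq (volume.restrict S) hPm meas1 meas2
        have hpt : ∀ w : EuclideanSpace ℝ (Fin d),
            ENNReal.ofReal (g w) ^ ((1:ℝ)/P) * (ENNReal.ofReal (g w) ^ ((1:ℝ)/m)
              * ENNReal.ofReal (‖v - w‖ ^ p))
            = ENNReal.ofReal (g w) * ENNReal.ofReal (‖v - w‖ ^ p) := by
          intro w
          rw [← mul_assoc, ← ENNReal.rpow_add_of_nonneg _ _ (one_div_nonneg.2 hPpos.le)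
              (one_div_nonneg.2 hm0.le),
            show (1:ℝ)/P + 1/m = 1 from by
              rw [one_div, one_div]; exact hPm.inv_add_inv_eq_one,
            ENNReal.rpow_one]
        simp only [Pi.mul_apply] at H
        have hL : ∫⁻ w in S, ENNReal.ofReal (g w) ^ ((1:ℝ)/P)
            * (ENNReal.ofReal (g w) ^ ((1:ℝ)/m) * ENNReal.ofReal (‖v - w‖ ^ p))
            = A₁ v := lintegral_congr fun w => hpt w
        have hR1 : ∫⁻ w in S, (ENNReal.ofReal (g w) ^ ((1:ℝ)/P)) ^ P
            = M := by
          rw [hMdef]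
          apply lintegral_congr
          intro w
          rw [← ENNReal.rpow_mul, one_div_mul_cancel hP0, ENNReal.rpow_one]
        have hR2 : ∫⁻ w in S, (ENNReal.ofReal (g w) ^ ((1:ℝ)/m)
            * ENNReal.ofReal (‖v - w‖ ^ p)) ^ m
            = ∫⁻ w in S, ENNReal.ofReal (g w) * ENNReal.ofReal (‖v - w‖ ^ p) ^ m := by
          apply lintegral_congr
          intro w
          rw [ENNReal.mul_rpow_of_nonneg _ _ hm0.le, ← ENNReal.rpow_mul,
            one_div_mul_cancel hm0.ne', ENNReal.rpow_one]
        rw [hL, hR1, hR2] at H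
        calc A₁ v ^ m ≤ (M ^ ((1:ℝ)/P)
              * (∫⁻ w in S, ENNReal.ofReal (g w)
                  * ENNReal.ofReal (‖v - w‖ ^ p) ^ m) ^ ((1:ℝ)/m)) ^ m :=
            ENNReal.rpow_le_rpow H hm0.le
          _ = M ^ (m - 1) * ∫⁻ w in S,
              ENNReal.ofReal (g w) * ENNReal.ofReal (‖v - w‖ ^ p) ^ m := by
            rw [ENNReal.mul_rpow_of_nonneg _ _ hm0.le, ← ENNReal.rpow_mul,
              ← ENNReal.rpow_mul, one_div_mul_cancel hm0.ne', ENNReal.rpow_one,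
              show (1:ℝ)/P * m = m - 1 from by
                rw [hPdef, one_div_div]
                field_simp]
      -- kernel integral over the ball for the near part
      have hkerball : ∀ w ∈ S, ∫⁻ v in B, ENNReal.ofReal (‖v - w‖ ^ p) ^ m
          ≤ ENNReal.ofReal ((3*r) ^ ((d:ℝ) + p*m)) * I1m := by
        intro w hw
        have heq : ∀ v : EuclideanSpace ℝ (Fin d),
            ENNReal.ofReal (‖v - w‖ ^ p) ^ m = ENNReal.ofReal (‖v - w‖ ^ (p*m)) := by
          intro v
          rw [ENNReal.ofReal_rpow_of_nonneg (Real.rpow_nonneg (norm_nonneg _) _) hm0.le,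
            ← Real.rpow_mul (norm_nonneg _)]
        calc ∫⁻ v in B, ENNReal.ofReal (‖v - w‖ ^ p) ^ m
            = ∫⁻ v in B, ENNReal.ofReal (‖v - w‖ ^ (p*m)) :=
              lintegral_congr fun v => heq v
          _ ≤ ∫⁻ v in closedBall w (3*r), ENNReal.ofReal (‖v - w‖ ^ (p*m)) := by
              apply lintegral_mono_set
              intro v hv
              rw [mem_closedBall]
              calc dist v w ≤ dist v v₀ + dist v₀ w := dist_triangle _ _ _
                _ ≤ r + 2*r := add_le_add (mem_closedBall.1 hv)
                    (by rw [dist_comm]; exact mem_closedBall.1 hw)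
                _ = 3*r := by ring
          _ = ENNReal.ofReal ((3*r) ^ ((d:ℝ) + p*m)) * I1m := landau_lint_ball_eq d w hr3
      -- putting the near part together
      have hX1 : (∫⁻ v in B, A₁ v ^ m) ^ ((1:ℝ)/m) ≤ c₁ * (R * μB ^ ((1:ℝ)/m - 1)) := by
        set c₃ : ℝ≥0∞ := ENNReal.ofReal ((3*r) ^ ((d:ℝ) + p*m)) * I1m with hc₃def
        have hc₃top : c₃ ≠ ∞ := ENNReal.mul_ne_top ENNReal.ofReal_ne_top hI1mtop
        have hstep : ∫⁻ v in B, A₁ v ^ m ≤ c₃ * M ^ m := by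
          have hMm1top : M ^ (m-1) ≠ ∞ :=
            (ENNReal.rpow_lt_top_of_nonneg (by linarith) hMtop).ne
          calc ∫⁻ v in B, A₁ v ^ m
              ≤ ∫⁻ v in B, M ^ (m - 1) * ∫⁻ w in S,
                  ENNReal.ofReal (g w) * ENNReal.ofReal (‖v - w‖ ^ p) ^ m :=
                lintegral_mono fun v => hol2 v
            _ = M ^ (m - 1) * ∫⁻ v in B, ∫⁻ w in S,
                  ENNReal.ofReal (g w) * ENNReal.ofReal (‖v - w‖ ^ p) ^ m :=
                lintegral_const_mul' _ _ hMm1top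
            _ = M ^ (m - 1) * ∫⁻ w in S, ENNReal.ofReal (g w)
                  * ∫⁻ v in B, ENNReal.ofReal (‖v - w‖ ^ p) ^ m := by
                congr 1
                rw [lintegral_lintegral_swap]
                · apply lintegral_congr
                  intro w
                  exact lintegral_const_mul' _ _ ENNReal.ofReal_ne_top
                · apply AEMeasurable.fun_mul
                  · exact ((hgm.comp measurable_snd).ennreal_ofReal).aemeasurable
                  · have : Measurable (fun q : EuclideanSpace ℝ (Fin d)
                        × EuclideanSpace ℝ (Fin d) => ‖q.1 - q.2‖ ^ p) := by fun_prop
                    exact (this.ennreal_ofReal.aemeasurable).pow_const m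
            _ ≤ M ^ (m - 1) * ∫⁻ w in S, ENNReal.ofReal (g w) * c₃ := by
                apply mul_le_mul_right
                apply setLIntegral_mono' (measurableSet_closedBall : MeasurableSet S)
                intro w hw
                exact mul_le_mul_right (hkerball w hw) _
            _ = M ^ (m - 1) * (c₃ * M) := by
                congr 1
                rw [show ∫⁻ w in S, ENNReal.ofReal (g w) * c₃
                    = ∫⁻ w in S, c₃ * ENNReal.ofReal (g w) from
                  lintegral_congr fun w => mul_comm _ _]
                exact lintegral_const_mul' _ _ hc₃top
            _ = c₃ * M ^ m := by
                rw [← mul_assoc, mul_comm (M ^ (m-1)) c₃, mul_assoc]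
                congr 1
                nth_rewrite 2 [← ENNReal.rpow_one M]
                rw [← ENNReal.rpow_add_of_nonneg _ _ (by linarith) zero_le_one]
                congr 1
                ring
        calc (∫⁻ v in B, A₁ v ^ m) ^ ((1:ℝ)/m)
            ≤ (c₃ * (R / (ENNReal.ofReal ((3*r) ^ p) * μB)) ^ m) ^ ((1:ℝ)/m) := by
              apply ENNReal.rpow_le_rpow _ (by positivity)
              refine le_trans hstep ?_
              exact mul_le_mul_right (ENNReal.rpow_le_rpow hMdiv hm0.le) _
          _ = c₃ ^ ((1:ℝ)/m) * (R / (ENNReal.ofReal ((3*r) ^ p) * μB)) := by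
              rw [ENNReal.mul_rpow_of_nonneg _ _ (by positivity), ← ENNReal.rpow_mul,
                mul_one_div_cancel hm0.ne', ENNReal.rpow_one]
          _ = c₁ * (R * μB ^ ((1:ℝ)/m - 1)) := by
              have hofReal3r : ENNReal.ofReal (3*r) = τ * ρ := by
                rw [hτdef, hρdef, ENNReal.ofReal_mul three_pos.le]
              have he1 : ENNReal.ofReal ((3*r) ^ ((d:ℝ) + p*m)) = (τ * ρ) ^ ((d:ℝ) + p*m) := by
                rw [← ENNReal.ofReal_rpow_of_pos hr3, hofReal3r]
              have he2 : ENNReal.ofReal ((3*r) ^ p) = (τ * ρ) ^ p := by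
                rw [← ENNReal.ofReal_rpow_of_pos hr3, hofReal3r]
              rw [hc₃def, he1, he2, hμBeq, hc₁def]
              exact landau_help3 hτ0 hτtop hρ0 hρtop hν₁0 hν₁top hI1mtop p (d:ℝ) hm0
      -- Minkowski and conclusion
      have hmink : (∫⁻ v in B, A v ^ m) ^ ((1:ℝ)/m)
          ≤ (∫⁻ v in B, A₁ v ^ m) ^ ((1:ℝ)/m) + (∫⁻ v in B, A₂ v ^ m) ^ ((1:ℝ)/m) := by
        have H := ENNReal.lintegral_Lp_add_le (μ := volume.restrict B)
          hA1meas.aemeasurable hA2meas.aemeasurable hm1.le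
        have : ∫⁻ v in B, A v ^ m = ∫⁻ v in B, (A₁ + A₂) v ^ m :=
          lintegral_congr fun v => by rw [hsplit v]; rfl
        rw [this]
        exact H
      have hmain : (∫⁻ v in B, A v ^ m) ^ ((1:ℝ)/m)
          ≤ (c₂ + c₁) * (R * μB ^ ((1:ℝ)/m - 1)) := by
        calc (∫⁻ v in B, A v ^ m) ^ ((1:ℝ)/m)
            ≤ (∫⁻ v in B, A₁ v ^ m) ^ ((1:ℝ)/m) + (∫⁻ v in B, A₂ v ^ m) ^ ((1:ℝ)/m) := hmink
          _ ≤ c₁ * (R * μB ^ ((1:ℝ)/m - 1)) + c₂ * (R * μB ^ ((1:ℝ)/m - 1)) :=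
              add_le_add hX1 hX2
          _ = (c₂ + c₁) * (R * μB ^ ((1:ℝ)/m - 1)) := by ring
      calc ∫⁻ v in B, A v ^ m
          = ((∫⁻ v in B, A v ^ m) ^ ((1:ℝ)/m)) ^ m := by
            rw [← ENNReal.rpow_mul, one_div_mul_cancel hm0.ne', ENNReal.rpow_one]
        _ ≤ ((c₂ + c₁) * (R * μB ^ ((1:ℝ)/m - 1))) ^ m :=
            ENNReal.rpow_le_rpow hmain hm0.le
        _ = (c₂ + c₁) ^ m * R ^ m * μB ^ ((1:ℝ) - m) :=
            landau_help2 _ _ _ hμB0 hμBtop hm0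
  refine ⟨K.toReal, ENNReal.toReal_pos hK0 hKtop, ?_⟩
  intro f hf0 hfi v₀ r hr
  -- replace `f` by a measurable nonnegative representative
  obtain ⟨g, hgsm, hgf⟩ := hfi.1
  set g' : EuclideanSpace ℝ (Fin d) → ℝ := fun w => max (g w) 0 with hg'def
  have hg'm : Measurable g' := (hgsm.measurable).max measurable_const
  have hg'0 : ∀ w, 0 ≤ g' w := fun w => le_max_right _ _
  have hfg' : f =ᵐ[volume] g' := by
    filter_upwards [hgf] with w hw
    simp only [hg'def, ← hw]
    exact (max_eq_left (hf0 w)).symm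
  have hg'i : Integrable g' := hfi.congr hfg'
  have hrepl : ∀ v : EuclideanSpace ℝ (Fin d),
      (∫ w, f w * ‖v - w‖ ^ p) = ∫ w, g' w * ‖v - w‖ ^ p := fun v =>
    integral_congr_ae (hfg'.mul Filter.EventuallyEq.rfl)
  simp only [hrepl]
  -- the `ℝ≥0∞`-valued potential
  have hker : Measurable (Function.uncurry
      fun (v w : EuclideanSpace ℝ (Fin d)) =>
        ENNReal.ofReal (g' w) * ENNReal.ofReal (‖v - w‖ ^ p)) := by
    apply Measurable.fun_mul
    · exact (hg'm.comp measurable_snd).ennreal_ofReal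
    · have : Measurable (fun q : EuclideanSpace ℝ (Fin d) × EuclideanSpace ℝ (Fin d) =>
          ‖q.1 - q.2‖ ^ p) := by fun_prop
      exact this.ennreal_ofReal
  set A : EuclideanSpace ℝ (Fin d) → ℝ≥0∞ :=
    fun v => ∫⁻ w, ENNReal.ofReal (g' w) * ENNReal.ofReal (‖v - w‖ ^ p) with hA
  have hAmeas : Measurable A := Measurable.lintegral_prod_right hker
  have a_eq : ∀ v : EuclideanSpace ℝ (Fin d),
      (∫ w, g' w * ‖v - w‖ ^ p) = (A v).toReal := by
    intro v
    rw [integral_eq_lintegral_of_nonneg_ae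
      (ae_of_all _ fun w => mul_nonneg (hg'0 w) (Real.rpow_nonneg (norm_nonneg _) _))
      ((show Measurable fun w => g' w * ‖v - w‖ ^ p by fun_prop).aestronglyMeasurable)]
    congr 1
    apply lintegral_congr_ae
    filter_upwards with w
    rw [ENNReal.ofReal_mul (hg'0 w)]
  simp only [a_eq]
  set B := closedBall v₀ r with hB
  set μB := volume B with hμB
  have hμB0 : μB ≠ 0 := (measure_closedBall_pos volume v₀ hr).ne'
  have hμBtop : μB ≠ ∞ := measure_closedBall_lt_top.ne
  set R := ∫⁻ v in B, A v with hRdef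
  -- `R` is finite
  have hRtop : R ≠ ∞ := by
    apply LT.lt.ne
    have hswap : R = ∫⁻ w, ENNReal.ofReal (g' w) *
        ∫⁻ v in B, ENNReal.ofReal (‖v - w‖ ^ p) := by
      rw [hRdef]
      rw [lintegral_lintegral_swap (hker.aemeasurable)]
      apply lintegral_congr
      intro w
      exact lintegral_const_mul' _ _ ENNReal.ofReal_ne_top
    set D : ℝ≥0∞ := ENNReal.ofReal ((3*r) ^ ((d:ℝ) + p)) *
        (∫⁻ v in closedBall (0 : EuclideanSpace ℝ (Fin d)) 1, ENNReal.ofReal (‖v‖ ^ p))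
        + ENNReal.ofReal (r ^ p) * μB with hD
    have hDtop : D ≠ ∞ := by
      rw [hD]
      exact (ENNReal.add_lt_top.2 ⟨ENNReal.mul_lt_top ENNReal.ofReal_lt_top
        (landau_I1_lt_top d hd0 hp1 hp2),
        ENNReal.mul_lt_top ENNReal.ofReal_lt_top hμBtop.lt_top⟩).ne
    have hbound : ∀ w : EuclideanSpace ℝ (Fin d),
        ∫⁻ v in B, ENNReal.ofReal (‖v - w‖ ^ p) ≤ D := by
      intro w
      by_cases hw : dist v₀ w ≤ 2*r
      · refine le_trans ?_ (le_add_right (le_refl _))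
        calc ∫⁻ v in B, ENNReal.ofReal (‖v - w‖ ^ p)
            ≤ ∫⁻ v in closedBall w (3*r), ENNReal.ofReal (‖v - w‖ ^ p) := by
              apply lintegral_mono_set
              intro v hv
              rw [mem_closedBall]
              calc dist v w ≤ dist v v₀ + dist v₀ w := dist_triangle _ _ _
                _ ≤ r + 2*r := add_le_add (mem_closedBall.1 hv) hw
                _ = 3*r := by ring
          _ = ENNReal.ofReal ((3*r) ^ ((d:ℝ) + p)) * _ := landau_lint_ball_eq d w (by linarith)
      · refine le_trans ?_ (le_add_left (le_refl _))
        have hpt : ∀ v ∈ B, ENNReal.ofReal (‖v - w‖ ^ p) ≤ ENNReal.ofReal (r ^ p) := by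
          intro v hv
          have h1 : r ≤ ‖v - w‖ := by
            have h2 : dist v₀ w ≤ dist v₀ v + dist v w := dist_triangle _ _ _
            have h3 : dist v₀ v ≤ r := by rw [dist_comm]; exact mem_closedBall.1 hv
            have h4 : 2*r < dist v₀ w := not_le.1 hw
            have h5 : ‖v - w‖ = dist v w := (dist_eq_norm _ _).symm
            linarith
          exact ENNReal.ofReal_le_ofReal (Real.rpow_le_rpow_of_nonpos hr h1 hp2)
        calc ∫⁻ v in B, ENNReal.ofReal (‖v - w‖ ^ p)
            ≤ ∫⁻ _ in B, ENNReal.ofReal (r ^ p) :=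
              setLIntegral_mono' measurableSet_closedBall hpt
          _ = ENNReal.ofReal (r ^ p) * μB := setLIntegral_const _ _
    rw [hswap]
    have hFfin : ∫⁻ w, ENNReal.ofReal (g' w) < ∞ := by
      rw [← hasFiniteIntegral_iff_ofReal (ae_of_all _ hg'0)]
      exact hg'i.2
    calc ∫⁻ w, ENNReal.ofReal (g' w) * ∫⁻ v in B, ENNReal.ofReal (‖v - w‖ ^ p)
        ≤ ∫⁻ w, ENNReal.ofReal (g' w) * D :=
          lintegral_mono fun w => mul_le_mul_right (hbound w) _
      _ = (∫⁻ w, ENNReal.ofReal (g' w)) * D := lintegral_mul_const' _ _ hDtop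
      _ < ∞ := ENNReal.mul_lt_top hFfin hDtop.lt_top
  have hae : ∀ᵐ v ∂(volume.restrict B), A v < ∞ := ae_lt_top hAmeas hRtop
  set L := ∫⁻ v in B, (A v) ^ m with hLdef
  have hRHS : ⨍ v in B, (A v).toReal = μB.toReal⁻¹ * R.toReal := by
    rw [setAverage_eq, smul_eq_mul]
    congr 1
    rw [integral_eq_lintegral_of_nonneg_ae (ae_of_all _ fun v => ENNReal.toReal_nonneg)
      hAmeas.ennreal_toReal.aestronglyMeasurable, hRdef]
    congr 1
    apply lintegral_congr_ae
    filter_upwards [hae] with v hv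
    rw [ENNReal.ofReal_toReal hv.ne]
  have hLHS : ⨍ v in B, (A v).toReal ^ m = μB.toReal⁻¹ * L.toReal := by
    rw [setAverage_eq, smul_eq_mul]
    congr 1
    rw [integral_eq_lintegral_of_nonneg_ae
      (ae_of_all _ fun v => Real.rpow_nonneg ENNReal.toReal_nonneg m)
      ((show Measurable fun v => (A v).toReal ^ m by fun_prop).aestronglyMeasurable), hLdef]
    congr 1
    apply lintegral_congr_ae
    filter_upwards [hae] with v hv
    rw [ENNReal.toReal_rpow,
      ENNReal.ofReal_toReal (ENNReal.rpow_lt_top_of_nonneg hm0.le hv.ne).ne]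
  rw [hLHS, hRHS]
  have hcore : L ≤ K ^ m * R ^ m * μB ^ ((1:ℝ) - m) := hK g' hg'm hg'0 hg'i v₀ r hr
  have hfin : K ^ m * R ^ m * μB ^ ((1:ℝ) - m) ≠ ∞ := by
    apply ENNReal.mul_ne_top
    · apply ENNReal.mul_ne_top
      · exact (ENNReal.rpow_lt_top_of_nonneg hm0.le hKtop).ne
      · exact (ENNReal.rpow_lt_top_of_nonneg hm0.le hRtop).ne
    · exact landau_rpow_ne_top hμB0 hμBtop _
  have hLtop : L ≠ ∞ := ne_top_of_le_ne_top hfin hcore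
  have h1 : L.toReal ≤ K.toReal^m * R.toReal^m * μB.toReal^((1:ℝ)-m) := by
    have h2 := ENNReal.toReal_mono hfin hcore
    rwa [ENNReal.toReal_mul, ENNReal.toReal_mul, ← ENNReal.toReal_rpow, ← ENNReal.toReal_rpow,
      ← ENNReal.toReal_rpow] at h2
  have hbpos : 0 < μB.toReal := ENNReal.toReal_pos hμB0 hμBtop
  have hKt0 : 0 ≤ K.toReal := ENNReal.toReal_nonneg
  have hRt0 : 0 ≤ R.toReal := ENNReal.toReal_nonneg
  have hLt0 : 0 ≤ L.toReal := ENNReal.toReal_nonneg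
  calc (μB.toReal⁻¹ * L.toReal) ^ ((1:ℝ)/m)
      ≤ (μB.toReal⁻¹ * (K.toReal^m * R.toReal^m * μB.toReal^((1:ℝ)-m))) ^ ((1:ℝ)/m) := by
        apply Real.rpow_le_rpow (by positivity)
          (mul_le_mul_of_nonneg_left h1 (inv_nonneg.2 hbpos.le)) (by positivity)
    _ = K.toReal * (μB.toReal⁻¹ * R.toReal) := by
        have hb : μB.toReal⁻¹ * μB.toReal ^ ((1:ℝ)-m) = (μB.toReal ^ m)⁻¹ := by
          rw [← Real.rpow_neg_one μB.toReal, ← Real.rpow_add hbpos,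
            show (-1) + ((1:ℝ)-m) = -m by ring, Real.rpow_neg hbpos.le]
        have hid : μB.toReal⁻¹ * (K.toReal^m * R.toReal^m * μB.toReal^((1:ℝ)-m))
            = (K.toReal * (μB.toReal⁻¹ * R.toReal)) ^ m := by
          rw [Real.mul_rpow hKt0 (mul_nonneg (inv_nonneg.2 hbpos.le) hRt0),
            Real.mul_rpow (inv_nonneg.2 hbpos.le) hRt0, Real.inv_rpow hbpos.le, ← hb]
          ring
        rw [hid, ← Real.rpow_mul
          (mul_nonneg hKt0 (mul_nonneg (inv_nonneg.2 hbpos.le) hRt0)),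
          mul_one_div_cancel hm0.ne', Real.rpow_one]
end

section
/- Let d ≥ 3 and γ ∈ [−d, −2]. There is a constant C depending only on d and γ such that for every nonnegative f ∈ L¹(ℝ^d) and every cube Q ⊂ ℝ^d, with h = f if γ = −d and h(v) = c(d,γ)∫ f(w)|v−w|^γ dw if γ > −d, and a(v) = C(d,γ)∫ f(w)|v−w|^{2+γ} dw, one has |Q|^{1/d} · ((1/|Q|)∫_Q h dv)^{1/2} · ((1/|Q|)∫_Q a^{-1} dv)^{1/2} ≤ C. -/
open MeasureTheory Metric

/-- The axis-parallel cube in `ℝ^d` with center `v₀` and side length `ℓ`. -/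
def axisCube (d : ℕ) (v₀ : EuclideanSpace ℝ (Fin d)) (ℓ : ℝ) :
    Set (EuclideanSpace ℝ (Fin d)) :=
  {v | ∀ i, |v i - v₀ i| ≤ ℓ / 2}

lemma axisCube_eq_preimage (d : ℕ) (v₀ : EuclideanSpace ℝ (Fin d)) (ℓ : ℝ) :
    axisCube d v₀ ℓ = ((MeasurableEquiv.toLp 2 (Fin d → ℝ)).symm) ⁻¹'
      (Set.univ.pi fun i => Set.Icc (v₀ i - ℓ / 2) (v₀ i + ℓ / 2)) := by
  ext v
  simp only [axisCube, Set.mem_setOf_eq, Set.mem_preimage, Set.mem_pi, Set.mem_univ,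
    Set.mem_Icc, forall_true_left]
  refine forall_congr' fun i => ?_
  rw [abs_le]
  have hvi : ((MeasurableEquiv.toLp 2 (Fin d → ℝ)).symm) v i = v i := rfl
  rw [hvi]
  constructor
  · rintro ⟨h1, h2⟩; exact ⟨by linarith, by linarith⟩
  · rintro ⟨h1, h2⟩; exact ⟨by linarith, by linarith⟩

lemma axisCube_measurableSet (d : ℕ) (v₀ : EuclideanSpace ℝ (Fin d)) (ℓ : ℝ) :
    MeasurableSet (axisCube d v₀ ℓ) := by
  rw [axisCube_eq_preimage]
  exact ((MeasurableEquiv.toLp 2 (Fin d → ℝ)).symm).measurable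
    (MeasurableSet.univ_pi fun i => measurableSet_Icc)

lemma axisCube_volume (d : ℕ) (v₀ : EuclideanSpace ℝ (Fin d)) {ℓ : ℝ} (hℓ : 0 ≤ ℓ) :
    volume (axisCube d v₀ ℓ) = ENNReal.ofReal (ℓ ^ d) := by
  rw [axisCube_eq_preimage]
  rw [(EuclideanSpace.volume_preserving_symm_measurableEquiv_toLp (Fin d)).measure_preimage
    ((MeasurableSet.univ_pi fun i => measurableSet_Icc)).nullMeasurableSet]
  rw [volume_pi_pi]
  simp only [Real.volume_Icc]
  have : ∀ i : Fin d, v₀ i + ℓ / 2 - (v₀ i - ℓ / 2) = ℓ := fun i => by ring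
  simp only [this, Finset.prod_const, Finset.card_univ, Fintype.card_fin]
  rw [ENNReal.ofReal_pow hℓ]
lemma axisCube_norm_le {d : ℕ} {v₀ v : EuclideanSpace ℝ (Fin d)} {ℓ : ℝ} (hℓ : 0 ≤ ℓ)
    (hv : v ∈ axisCube d v₀ ℓ) : ‖v - v₀‖ ≤ ℓ * Real.sqrt d / 2 := by
  rw [EuclideanSpace.norm_eq]
  have h1 : ∀ i, ‖(v - v₀) i‖ ^ 2 ≤ (ℓ / 2) ^ 2 := by
    intro i
    have : (v - v₀) i = v i - v₀ i := rfl
    rw [this, Real.norm_eq_abs]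
    have := hv i
    have h2 : (0:ℝ) ≤ |v i - v₀ i| := abs_nonneg _
    nlinarith
  calc Real.sqrt (∑ i, ‖(v - v₀) i‖ ^ 2) ≤ Real.sqrt (∑ _i : Fin d, (ℓ / 2) ^ 2) := by
        apply Real.sqrt_le_sqrt
        exact Finset.sum_le_sum fun i _ => h1 i
    _ = ℓ * Real.sqrt d / 2 := by
        rw [Finset.sum_const, Finset.card_univ, Fintype.card_fin, nsmul_eq_mul]
        rw [Real.sqrt_mul (by positivity), Real.sqrt_sq (by positivity)]
        ring
lemma lintegral_ball_rpow_le (d : ℕ) (hd : 1 ≤ d) (γ : ℝ) (hγd : -(d : ℝ) < γ) (hγ0 : γ ≤ 0) :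
    ∃ K : ℝ, 0 < K ∧ ∀ (w : EuclideanSpace ℝ (Fin d)) (ρ : ℝ), 0 < ρ →
      ∫⁻ v in ball w ρ, ENNReal.ofReal (‖v - w‖ ^ γ) ≤ ENNReal.ofReal (K * ρ ^ ((d : ℝ) + γ)) := by
  haveI : Nontrivial (EuclideanSpace ℝ (Fin d)) :=
    Module.nontrivial_of_finrank_pos (R := ℝ)
      (by rw [finrank_euclideanSpace_fin]; exact hd)
  set E := EuclideanSpace ℝ (Fin d)
  have hdγ : (0 : ℝ) < (d : ℝ) + γ := by linarith
  set t : ℝ := 1 / 2 with ht_def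
  have ht : (0 : ℝ) < t := by norm_num
  have ht1 : t < 1 := by norm_num
  set q : ℝ := t ^ ((d : ℝ) + γ) with hq_def
  have hq0 : 0 < q := Real.rpow_pos_of_pos ht _
  have hq1 : q < 1 := Real.rpow_lt_one ht.le ht1 hdγ
  set B : ENNReal := volume (ball (0 : E) 1) with hB_def
  have hB : B ≠ ⊤ := measure_ball_lt_top.ne
  set M : ENNReal := ENNReal.ofReal ((2 : ℝ) ^ d) * B * (1 - ENNReal.ofReal q)⁻¹ with hM_def
  have hM : M ≠ ⊤ := by
    apply ENNReal.mul_ne_top (ENNReal.mul_ne_top ENNReal.ofReal_ne_top hB)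
    rw [ENNReal.inv_ne_top]
    simp only [ne_eq, tsub_eq_zero_iff_le, not_le]
    exact ENNReal.ofReal_lt_one.mpr hq1
  refine ⟨M.toReal + 1, by positivity, fun w ρ hρ => ?_⟩
  set S : ℕ → Set E := fun k => ball w (ρ * t ^ k) \ ball w (ρ * t ^ (k + 1)) with hS_def
  have hcover : ball w ρ ⊆ {w} ∪ ⋃ k, S k := by
    intro v hv
    rcases eq_or_ne v w with rfl | hvw
    · exact Or.inl rfl
    · right
      have hr0 : 0 < dist v w := dist_pos.mpr hvw
      have hrρ : dist v w < ρ := mem_ball.mp hv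
      have hex : ∃ k : ℕ, ρ * t ^ k ≤ dist v w := by
        obtain ⟨n, hn⟩ := exists_pow_lt_of_lt_one (div_pos hr0 hρ) ht1
        exact ⟨n, by rw [mul_comm]; exact le_of_lt ((lt_div_iff₀ hρ).mp hn)⟩
      classical
      have hk₀ne : Nat.find hex ≠ 0 := by
        intro h
        have := Nat.find_spec hex
        rw [h] at this
        simp at this
        linarith
      obtain ⟨k, hk⟩ := Nat.exists_eq_succ_of_ne_zero hk₀ne
      have hspec : ρ * t ^ (k + 1) ≤ dist v w := by
        have := Nat.find_spec hex; rwa [hk] at this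
      have hmin : ¬ ρ * t ^ k ≤ dist v w :=
        Nat.find_min hex (by rw [hk]; exact Nat.lt_succ_self k)
      refine Set.mem_iUnion.mpr ⟨k, mem_ball.mpr (lt_of_not_ge hmin), fun hmem => ?_⟩
      exact absurd hspec (not_le.mpr (mem_ball.mp hmem))
  calc ∫⁻ v in ball w ρ, ENNReal.ofReal (‖v - w‖ ^ γ)
      ≤ ∫⁻ v in {w} ∪ ⋃ k, S k, ENNReal.ofReal (‖v - w‖ ^ γ) := lintegral_mono_set hcover
    _ ≤ (∫⁻ v in {w}, ENNReal.ofReal (‖v - w‖ ^ γ)) +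
        ∫⁻ v in ⋃ k, S k, ENNReal.ofReal (‖v - w‖ ^ γ) := lintegral_union_le _ _ _
    _ ≤ 0 + ∑' k, ∫⁻ v in S k, ENNReal.ofReal (‖v - w‖ ^ γ) := by
        gcongr
        · rw [setLIntegral_measure_zero _ _ (measure_singleton w)]
        · exact lintegral_iUnion_le _ _
    _ ≤ ∑' k, ENNReal.ofReal ((2 : ℝ) ^ d * ρ ^ ((d : ℝ) + γ)) * B * ENNReal.ofReal q ^ (k + 1) := by
        rw [zero_add]
        apply ENNReal.tsum_le_tsum
        intro k
        have hsk : 0 < ρ * t ^ (k + 1) := by positivity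
        have hstep : ∫⁻ v in S k, ENNReal.ofReal (‖v - w‖ ^ γ)
            ≤ ENNReal.ofReal ((ρ * t ^ (k + 1)) ^ γ) * volume (S k) := by
          rw [← setLIntegral_const]
          apply setLIntegral_mono measurable_const
          intro v hv
          apply ENNReal.ofReal_le_ofReal
          apply Real.rpow_le_rpow_of_nonpos hsk _ hγ0
          have := hv.2
          rw [mem_ball, not_lt] at this
          rwa [← dist_eq_norm]
        have hvolS : volume (S k) ≤ ENNReal.ofReal ((ρ * t ^ k) ^ d) * B := by
          calc volume (S k) ≤ volume (ball w (ρ * t ^ k)) := measure_mono Set.diff_subset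
            _ = ENNReal.ofReal ((ρ * t ^ k) ^ Module.finrank ℝ E) * B :=
                Measure.addHaar_ball volume w (by positivity)
            _ = ENNReal.ofReal ((ρ * t ^ k) ^ d) * B := by
                rw [show Module.finrank ℝ E = d from finrank_euclideanSpace_fin]
        have hreal : (ρ * t ^ (k + 1)) ^ γ * (ρ * t ^ k) ^ d
            = (2 : ℝ) ^ d * ρ ^ ((d : ℝ) + γ) * q ^ (k + 1) := by
          have h2 : ρ * t ^ k = 2 * (ρ * t ^ (k + 1)) := by rw [ht_def]; ring
          have hA : (ρ * t ^ (k + 1)) ^ γ * (ρ * t ^ k) ^ d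
              = (2 : ℝ) ^ d * (ρ * t ^ (k + 1)) ^ ((d : ℝ) + γ) := by
            rw [h2, mul_pow, ← Real.rpow_natCast (ρ * t ^ (k + 1)) d]
            rw [show (ρ * t ^ (k + 1)) ^ γ * ((2 : ℝ) ^ d * (ρ * t ^ (k + 1)) ^ (d : ℝ))
                = (2 : ℝ) ^ d * ((ρ * t ^ (k + 1)) ^ γ * (ρ * t ^ (k + 1)) ^ (d : ℝ)) from by ring]
            rw [← Real.rpow_add hsk, add_comm γ]
          have hBB : (ρ * t ^ (k + 1)) ^ ((d : ℝ) + γ) = ρ ^ ((d : ℝ) + γ) * q ^ (k + 1) := by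
            rw [Real.mul_rpow hρ.le (by positivity), ← Real.rpow_natCast t (k + 1),
              ← Real.rpow_mul ht.le, mul_comm ((k + 1 : ℕ) : ℝ), Real.rpow_mul ht.le,
              Real.rpow_natCast]
          rw [hA, hBB]; ring
        calc ∫⁻ v in S k, ENNReal.ofReal (‖v - w‖ ^ γ)
            ≤ ENNReal.ofReal ((ρ * t ^ (k + 1)) ^ γ) * (ENNReal.ofReal ((ρ * t ^ k) ^ d) * B) :=
              hstep.trans (mul_le_mul_right hvolS _)
          _ = ENNReal.ofReal ((2 : ℝ) ^ d * ρ ^ ((d : ℝ) + γ)) * B * ENNReal.ofReal q ^ (k + 1) := by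
              rw [← mul_assoc, ← ENNReal.ofReal_mul (Real.rpow_nonneg hsk.le _), hreal,
                ← ENNReal.ofReal_pow hq0.le,
                ENNReal.ofReal_mul (by positivity), mul_assoc, mul_comm (ENNReal.ofReal (q ^ (k+1))) B,
                ← mul_assoc]
    _ ≤ ENNReal.ofReal ((M.toReal + 1) * ρ ^ ((d : ℝ) + γ)) := by
        rw [ENNReal.tsum_mul_left]
        have hsum : ∑' k : ℕ, ENNReal.ofReal q ^ (k + 1) ≤ (1 - ENNReal.ofReal q)⁻¹ := by
          calc ∑' k : ℕ, ENNReal.ofReal q ^ (k + 1) ≤ ∑' k : ℕ, ENNReal.ofReal q ^ k := by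
                apply ENNReal.tsum_le_tsum
                intro k
                exact pow_le_pow_of_le_one (zero_le) (ENNReal.ofReal_le_one.mpr hq1.le) (Nat.le_succ k)
            _ = (1 - ENNReal.ofReal q)⁻¹ := ENNReal.tsum_geometric _
        calc ENNReal.ofReal ((2:ℝ) ^ d * ρ ^ ((d : ℝ) + γ)) * B * ∑' k : ℕ, ENNReal.ofReal q ^ (k + 1)
            ≤ ENNReal.ofReal ((2:ℝ) ^ d * ρ ^ ((d : ℝ) + γ)) * B * (1 - ENNReal.ofReal q)⁻¹ := by
              gcongr
          _ = ENNReal.ofReal (ρ ^ ((d : ℝ) + γ)) * M := by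
              rw [hM_def, ENNReal.ofReal_mul (by positivity)]
              ring
          _ ≤ ENNReal.ofReal (ρ ^ ((d : ℝ) + γ)) * ENNReal.ofReal (M.toReal + 1) := by
              gcongr
              calc M = ENNReal.ofReal M.toReal := (ENNReal.ofReal_toReal hM).symm
                _ ≤ ENNReal.ofReal (M.toReal + 1) := ENNReal.ofReal_le_ofReal (by linarith)
          _ = ENNReal.ofReal ((M.toReal + 1) * ρ ^ ((d : ℝ) + γ)) := by
              rw [← ENNReal.ofReal_mul (Real.rpow_nonneg hρ.le _), mul_comm]

lemma cube_kernel_bound (d : ℕ) (hd : 3 ≤ d) (γ : ℝ) (hγd : -(d : ℝ) < γ) (hγ2 : γ ≤ -2) :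
    ∃ C : ℝ, 0 < C ∧ ∀ (v₀ w : EuclideanSpace ℝ (Fin d)) (ℓ : ℝ), 0 < ℓ →
      ∫⁻ v in axisCube d v₀ ℓ, ENNReal.ofReal (‖v - w‖ ^ γ)
        ≤ ENNReal.ofReal (C * ℓ ^ (d - 2) * (‖v₀ - w‖ + ℓ * Real.sqrt d) ^ (2 + γ)) := by
  obtain ⟨K, hK, hKball⟩ := lintegral_ball_rpow_le d (by omega) γ hγd (by linarith)
  set sd : ℝ := Real.sqrt d with hsd_def
  have hsd1 : 1 ≤ sd := by
    rw [hsd_def, show (1:ℝ) = Real.sqrt 1 from (Real.sqrt_one).symm]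
    exact Real.sqrt_le_sqrt (by exact_mod_cast (by omega : 1 ≤ d))
  have hsd0 : 0 < sd := lt_of_lt_of_le one_pos hsd1
  refine ⟨(4:ℝ) ^ d + K * (2 * sd) ^ (d - 2), by positivity, fun v₀ w ℓ hℓ => ?_⟩
  set C : ℝ := (4:ℝ) ^ d + K * (2 * sd) ^ (d - 2) with hC_def
  set R : ℝ := ‖v₀ - w‖ with hR_def
  have hR0 : 0 ≤ R := norm_nonneg _
  set X : ℝ := R + ℓ * sd with hX_def
  have hX0 : 0 < X := by positivity
  have hℓX : ℓ ≤ X := by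
    have : ℓ ≤ ℓ * sd := le_mul_of_one_le_right hℓ.le hsd1
    linarith
  have hpow : ℓ ^ (d - 2) * ℓ ^ 2 = ℓ ^ d := by
    rw [← pow_add]; congr 1; omega
  rcases le_or_gt (ℓ * sd) R with hcase | hcase
  · -- far case
    have hlow : ∀ v ∈ axisCube d v₀ ℓ, X / 4 ≤ ‖v - w‖ := by
      intro v hv
      have h1 : ‖v - v₀‖ ≤ ℓ * sd / 2 := axisCube_norm_le hℓ.le hv
      have h2 : R - ‖v - w‖ ≤ ‖v - v₀‖ := by
        have := norm_sub_norm_le (v₀ - w) (v - w)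
        have heq : v₀ - w - (v - w) = v₀ - v := by abel
        rw [heq, norm_sub_rev v₀ v] at this
        linarith [this]
      rw [hX_def]
      linarith
    have hstep : ∫⁻ v in axisCube d v₀ ℓ, ENNReal.ofReal (‖v - w‖ ^ γ)
        ≤ ENNReal.ofReal ((X / 4) ^ γ) * volume (axisCube d v₀ ℓ) := by
      rw [← setLIntegral_const]
      apply setLIntegral_mono measurable_const
      intro v hv
      exact ENNReal.ofReal_le_ofReal
        (Real.rpow_le_rpow_of_nonpos (by positivity) (hlow v hv) (by linarith))
    refine hstep.trans ?_
    rw [axisCube_volume d v₀ hℓ.le, ← ENNReal.ofReal_mul (by positivity)]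
    apply ENNReal.ofReal_le_ofReal
    have hXγ : (X / 4) ^ γ = X ^ γ * ((4:ℝ) ^ γ)⁻¹ := by
      rw [Real.div_rpow hX0.le (by norm_num), div_eq_mul_inv]
    have hX2γ : X ^ (2 + γ) = X ^ 2 * X ^ γ := by
      rw [Real.rpow_add hX0, show X ^ (2:ℝ) = X ^ 2 from by
        rw [show (2:ℝ) = ((2:ℕ):ℝ) from by norm_num, Real.rpow_natCast]]
    rw [hXγ, hX2γ, ← hpow]
    have h4γ : ((4:ℝ) ^ γ)⁻¹ ≤ (4:ℝ) ^ d := by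
      rw [← Real.rpow_neg (by norm_num : (0:ℝ) ≤ 4)]
      calc (4:ℝ) ^ (-γ) ≤ (4:ℝ) ^ ((d:ℝ)) :=
            Real.rpow_le_rpow_of_exponent_le (by norm_num) (by linarith)
        _ = (4:ℝ) ^ d := by rw [Real.rpow_natCast]
    calc X ^ γ * ((4:ℝ) ^ γ)⁻¹ * (ℓ ^ (d-2) * ℓ ^ 2)
        = (((4:ℝ) ^ γ)⁻¹ * ℓ ^ 2) * (ℓ ^ (d-2) * X ^ γ) := by ring
      _ ≤ ((4:ℝ) ^ d * X ^ 2) * (ℓ ^ (d-2) * X ^ γ) := by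
          apply mul_le_mul_of_nonneg_right _ (by positivity)
          apply mul_le_mul h4γ (by nlinarith) (by positivity) (by positivity)
      _ ≤ (C * X ^ 2) * (ℓ ^ (d-2) * X ^ γ) := by
          have hC4 : (4:ℝ) ^ d ≤ C := by
            rw [hC_def]; nlinarith [pow_pos (by positivity : (0:ℝ) < 2 * sd) (d - 2)]
          apply mul_le_mul_of_nonneg_right _ (by positivity)
          exact mul_le_mul_of_nonneg_right hC4 (by positivity)
      _ = C * ℓ ^ (d-2) * (X ^ 2 * X ^ γ) := by ring
  · -- near case
    have hsub : axisCube d v₀ ℓ ⊆ ball w (2 * (ℓ * sd)) := by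
      intro v hv
      have h1 : ‖v - v₀‖ ≤ ℓ * sd / 2 := axisCube_norm_le hℓ.le hv
      have h2 : ‖v - w‖ ≤ ‖v - v₀‖ + R := by
        have := norm_add_le (v - v₀) (v₀ - w)
        have heq : v - v₀ + (v₀ - w) = v - w := by abel
        rw [heq] at this
        exact this
      rw [mem_ball, dist_eq_norm]
      have hℓsd : 0 < ℓ * sd := by positivity
      linarith
    calc ∫⁻ v in axisCube d v₀ ℓ, ENNReal.ofReal (‖v - w‖ ^ γ)
        ≤ ∫⁻ v in ball w (2 * (ℓ * sd)), ENNReal.ofReal (‖v - w‖ ^ γ) := lintegral_mono_set hsub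
      _ ≤ ENNReal.ofReal (K * (2 * (ℓ * sd)) ^ ((d:ℝ) + γ)) := hKball w _ (by positivity)
      _ ≤ ENNReal.ofReal (C * ℓ ^ (d-2) * X ^ (2 + γ)) := by
          apply ENNReal.ofReal_le_ofReal
          set Y : ℝ := 2 * (ℓ * sd) with hY_def
          have hY0 : 0 < Y := by positivity
          have hXY : X ≤ Y := by rw [hX_def, hY_def]; nlinarith
          have hsplit : Y ^ ((d:ℝ) + γ) = Y ^ (d - 2) * Y ^ (2 + γ) := by
            rw [← Real.rpow_natCast Y (d - 2), ← Real.rpow_add hY0]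
            congr 1
            have : ((d - 2 : ℕ) : ℝ) = (d : ℝ) - 2 := by
              have : (2:ℕ) ≤ d := by omega
              exact Nat.cast_sub this
            rw [this]; ring
          have hYX : Y ^ (2 + γ) ≤ X ^ (2 + γ) :=
            Real.rpow_le_rpow_of_nonpos hX0 hXY (by linarith)
          have hYpow : Y ^ (d - 2) = (2 * sd) ^ (d - 2) * ℓ ^ (d - 2) := by
            rw [hY_def, show 2 * (ℓ * sd) = (2 * sd) * ℓ from by ring, mul_pow]
          calc K * Y ^ ((d:ℝ) + γ) = K * (2 * sd) ^ (d-2) * ℓ ^ (d-2) * Y ^ (2+γ) := by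
                rw [hsplit, hYpow]; ring
            _ ≤ K * (2 * sd) ^ (d-2) * ℓ ^ (d-2) * X ^ (2+γ) := by
                apply mul_le_mul_of_nonneg_left hYX (by positivity)
            _ ≤ C * ℓ ^ (d-2) * X ^ (2+γ) := by
                have : K * (2 * sd) ^ (d-2) ≤ C := by
                  rw [hC_def]; nlinarith [pow_pos (by norm_num : (0:ℝ) < 4) d]
                apply mul_le_mul_of_nonneg_right _ (Real.rpow_nonneg hX0.le _)
                exact mul_le_mul_of_nonneg_right this (by positivity)

lemma fg_integrable (d : ℕ) {f : EuclideanSpace ℝ (Fin d) → ℝ} (hf0 : ∀ v, 0 ≤ f v)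
    (hfm : StronglyMeasurable f) (hfi : Integrable f) (v₀ : EuclideanSpace ℝ (Fin d))
    {c : ℝ} (hc : 0 < c) {β : ℝ} (hβ : β ≤ 0) :
    Integrable (fun w => f w * (‖v₀ - w‖ + c) ^ β) := by
  have hmeas : Measurable fun w : EuclideanSpace ℝ (Fin d) => (‖v₀ - w‖ + c) ^ β :=
    ((measurable_const.sub measurable_id).norm.add measurable_const).pow measurable_const
  apply Integrable.mono' (hfi.const_mul (c ^ β))
    ((hfm.measurable.mul hmeas).aestronglyMeasurable)
  apply ae_of_all
  intro w
  have h1 : (‖v₀ - w‖ + c) ^ β ≤ c ^ β :=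
    Real.rpow_le_rpow_of_nonpos hc (le_add_of_nonneg_left (norm_nonneg _)) hβ
  have h2 : 0 ≤ (‖v₀ - w‖ + c) ^ β := Real.rpow_nonneg (by positivity) _
  simp only [Pi.mul_apply]
  rw [Real.norm_eq_abs, abs_of_nonneg (mul_nonneg (hf0 w) h2), mul_comm (c ^ β) (f w)]
  exact mul_le_mul_of_nonneg_left h1 (hf0 w)

lemma core_bound (d : ℕ) (hd : 3 ≤ d) (γ : ℝ) (hγ₂ : γ ≤ -2)
    (f : EuclideanSpace ℝ (Fin d) → ℝ) (hf0 : ∀ v, 0 ≤ f v)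
    (hfm : StronglyMeasurable f) (hfi : Integrable f)
    (v₀ : EuclideanSpace ℝ (Fin d)) (ℓ : ℝ) (hℓ : 0 < ℓ)
    (h : EuclideanSpace ℝ (Fin d) → ℝ) (hh0 : ∀ v, 0 ≤ h v)
    (CH : ℝ) (hCH : 0 < CH)
    (hint : ∫ v in axisCube d v₀ ℓ, h v ≤ CH * ℓ ^ (d - 2) *
      ∫ w, f w * (‖v₀ - w‖ + ℓ * Real.sqrt d) ^ (2 + γ)) :
    ℓ * (⨍ v in axisCube d v₀ ℓ, h v) ^ ((1 : ℝ) / 2) *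
      (⨍ v in axisCube d v₀ ℓ, (∫ w, f w * ‖v - w‖ ^ (2 + γ))⁻¹) ^ ((1 : ℝ) / 2)
      ≤ CH ^ ((1 : ℝ) / 2) := by
  have hβ : 2 + γ ≤ 0 := by linarith
  set Q := axisCube d v₀ ℓ with hQ_def
  have hQm : MeasurableSet Q := axisCube_measurableSet d v₀ ℓ
  have hQvol : volume Q = ENNReal.ofReal (ℓ ^ d) := axisCube_volume d v₀ hℓ.le
  have hQtor : (volume Q).toReal = ℓ ^ d := by
    rw [hQvol, ENNReal.toReal_ofReal (by positivity)]
  set sd : ℝ := Real.sqrt d with hsd_def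
  have hsd1 : 1 ≤ sd := by
    rw [hsd_def, show (1:ℝ) = Real.sqrt 1 from (Real.sqrt_one).symm]
    exact Real.sqrt_le_sqrt (by exact_mod_cast (by omega : 1 ≤ d))
  have hsd0 : 0 < sd := lt_of_lt_of_le one_pos hsd1
  set g : EuclideanSpace ℝ (Fin d) → ℝ := fun w => (‖v₀ - w‖ + ℓ * sd) ^ (2 + γ) with hg_def
  have hg_pos : ∀ w, 0 < g w := fun w => Real.rpow_pos_of_pos (by positivity) _
  set F : EuclideanSpace ℝ (Fin d) → ℝ := fun w => f w * g w with hF_def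
  have hF0 : ∀ w, 0 ≤ F w := fun w => mul_nonneg (hf0 w) (hg_pos w).le
  have hFi : Integrable F := fg_integrable d hf0 hfm hfi v₀ (by positivity) hβ
  set A : ℝ := ∫ w, F w with hA_def
  have hA0 : 0 ≤ A := integral_nonneg hF0
  set a : EuclideanSpace ℝ (Fin d) → ℝ := fun v => ∫ w, f w * ‖v - w‖ ^ (2 + γ) with ha_def
  have ha0 : ∀ v, 0 ≤ a v := fun v =>
    integral_nonneg fun w => mul_nonneg (hf0 w) (Real.rpow_nonneg (norm_nonneg _) _)
  have ham : StronglyMeasurable a := by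
    have : StronglyMeasurable fun p : EuclideanSpace ℝ (Fin d) × EuclideanSpace ℝ (Fin d) =>
        f p.2 * ‖p.1 - p.2‖ ^ (2 + γ) :=
      ((hfm.measurable.comp measurable_snd).mul
        (((measurable_fst.sub measurable_snd).norm).pow measurable_const)).stronglyMeasurable
    exact this.integral_prod_right'
  have havg_h_nonneg : 0 ≤ ⨍ v in Q, h v := by
    rw [setAverage_eq]
    exact smul_nonneg (by positivity) (setIntegral_nonneg hQm fun v _ => hh0 v)
  have havg_a_nonneg : 0 ≤ ⨍ v in Q, (a v)⁻¹ := by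
    rw [setAverage_eq]
    exact smul_nonneg (by positivity) (setIntegral_nonneg hQm fun v _ => inv_nonneg.mpr (ha0 v))
  rcases eq_or_lt_of_le hA0 with hA | hA
  · -- A = 0 : the h-average vanishes
    have hRHS0 : CH * ℓ ^ (d - 2) * A = 0 := by rw [← hA, mul_zero]
    have hint0 : ∫ v in Q, h v = 0 :=
      le_antisymm (by rw [← hRHS0]; exact hint) (setIntegral_nonneg hQm fun v _ => hh0 v)
    rw [setAverage_eq, hint0, smul_zero, Real.zero_rpow (by norm_num : (1:ℝ)/2 ≠ 0),
      mul_zero, zero_mul]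
    positivity
  · -- A > 0
    have hainv : ∀ v ∈ Q, (a v)⁻¹ ≤ A⁻¹ := by
      intro v hv
      by_cases hiv : Integrable (fun w => f w * ‖v - w‖ ^ (2 + γ)) volume
      · have hae : ∀ᵐ w : EuclideanSpace ℝ (Fin d), F w ≤ f w * ‖v - w‖ ^ (2 + γ) := by
          haveI : Nontrivial (EuclideanSpace ℝ (Fin d)) :=
            Module.nontrivial_of_finrank_pos (R := ℝ)
              (by rw [finrank_euclideanSpace_fin]; omega)
          have hne : ∀ᵐ w : EuclideanSpace ℝ (Fin d), w ≠ v := by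
            rw [ae_iff]
            have hset : {w : EuclideanSpace ℝ (Fin d) | ¬ w ≠ v} = {v} := by ext w; simp
            rw [hset]
            exact measure_singleton v
          filter_upwards [hne] with w hw
          have hvw : 0 < ‖v - w‖ := by
            rw [norm_pos_iff, sub_ne_zero]; exact fun hc => hw hc.symm
          apply mul_le_mul_of_nonneg_left _ (hf0 w)
          apply Real.rpow_le_rpow_of_nonpos hvw _ hβ
          have h1 : ‖v - v₀‖ ≤ ℓ * sd / 2 := axisCube_norm_le hℓ.le hv
          have h2 : ‖v - w‖ ≤ ‖v - v₀‖ + ‖v₀ - w‖ := by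
            have := norm_add_le (v - v₀) (v₀ - w)
            rwa [show v - v₀ + (v₀ - w) = v - w from by abel] at this
          have : (0:ℝ) ≤ ℓ * sd := by positivity
          linarith
        have hAle : A ≤ a v := integral_mono_ae hFi hiv hae
        exact inv_anti₀ hA hAle
      · have : a v = 0 := integral_undef hiv
        rw [this, inv_zero]
        positivity
    have hconst_int : IntegrableOn (fun _ : EuclideanSpace ℝ (Fin d) => A⁻¹) Q := by
      apply (integrableOn_const_iff (C := A⁻¹)).mpr
      right; rw [hQvol]; exact ENNReal.ofReal_lt_top
    have hIa : IntegrableOn (fun v => (a v)⁻¹) Q := by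
      apply Integrable.mono' hconst_int (ham.measurable.inv.aestronglyMeasurable.restrict)
      rw [ae_restrict_iff' hQm]
      apply ae_of_all
      intro v hv
      rw [Real.norm_eq_abs, Pi.inv_apply, abs_of_nonneg (inv_nonneg.mpr (ha0 v))]
      exact hainv v hv
    have hIavg : ⨍ v in Q, (a v)⁻¹ ≤ A⁻¹ := by
      rw [setAverage_eq, measureReal_def, hQtor, smul_eq_mul]
      have hle : ∫ v in Q, (a v)⁻¹ ≤ ∫ _v in Q, A⁻¹ :=
        setIntegral_mono_on hIa hconst_int hQm hainv
      rw [setIntegral_const, measureReal_def, hQtor, smul_eq_mul] at hle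
      calc (ℓ ^ d)⁻¹ * ∫ v in Q, (a v)⁻¹ ≤ (ℓ ^ d)⁻¹ * (ℓ ^ d * A⁻¹) :=
            mul_le_mul_of_nonneg_left hle (by positivity)
        _ = A⁻¹ := by field_simp
    have hHavg : ⨍ v in Q, h v ≤ CH * A / ℓ ^ 2 := by
      rw [setAverage_eq, measureReal_def, hQtor, smul_eq_mul]
      have hpow : ℓ ^ (d - 2) * ℓ ^ 2 = ℓ ^ d := by rw [← pow_add]; congr 1; omega
      calc (ℓ ^ d)⁻¹ * ∫ v in Q, h v ≤ (ℓ ^ d)⁻¹ * (CH * ℓ ^ (d - 2) * A) :=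
            mul_le_mul_of_nonneg_left hint (by positivity)
        _ = CH * A / ℓ ^ 2 := by
            rw [← hpow]
            have hℓ2 : (ℓ:ℝ) ^ (d-2) ≠ 0 := by positivity
            field_simp
    have h1 : (⨍ v in Q, h v) ^ ((1:ℝ)/2) ≤ (CH * A / ℓ ^ 2) ^ ((1:ℝ)/2) :=
      Real.rpow_le_rpow havg_h_nonneg hHavg (by norm_num)
    have h2 : (⨍ v in Q, (a v)⁻¹) ^ ((1:ℝ)/2) ≤ (A⁻¹) ^ ((1:ℝ)/2) :=
      Real.rpow_le_rpow havg_a_nonneg hIavg (by norm_num)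
    have hℓeq : ((ℓ ^ 2 : ℝ)) ^ ((1:ℝ)/2) = ℓ := by
      rw [← Real.rpow_natCast ℓ 2, ← Real.rpow_mul hℓ.le]
      norm_num
    calc ℓ * (⨍ v in Q, h v) ^ ((1:ℝ)/2) * (⨍ v in Q, (a v)⁻¹) ^ ((1:ℝ)/2)
        ≤ ℓ * (CH * A / ℓ ^ 2) ^ ((1:ℝ)/2) * (A⁻¹) ^ ((1:ℝ)/2) := by
          apply mul_le_mul _ h2 (Real.rpow_nonneg havg_a_nonneg _) (by positivity)
          exact mul_le_mul_of_nonneg_left h1 hℓ.le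
      _ = (ℓ ^ 2) ^ ((1:ℝ)/2) * (CH * A / ℓ ^ 2) ^ ((1:ℝ)/2) * (A⁻¹) ^ ((1:ℝ)/2) := by
          rw [hℓeq]
      _ = ((ℓ ^ 2) * (CH * A / ℓ ^ 2) * A⁻¹) ^ ((1:ℝ)/2) := by
          rw [← Real.mul_rpow (by positivity) (by positivity),
            ← Real.mul_rpow (by positivity) (inv_nonneg.mpr hA0)]
      _ = CH ^ ((1:ℝ)/2) := by
          congr 1
          field_simp

/-- For `d ≥ 3`, `γ ∈ [-d,-2]`, the reaction coefficient `h_{f,γ}` (equal to `f` if `γ = -d`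
and to `f * |v|^γ` otherwise) and the diffusion trace `a_{f,γ} = f * |v|^{2+γ}` satisfy
`|Q|^{1/d} (⨍_Q h)^{1/2} (⨍_Q a⁻¹)^{1/2} ≤ C(d,γ)` on every cube `Q`. -/
theorem landau_h_over_a_cube_bound (d : ℕ) (hd : 3 ≤ d) (γ : ℝ)
    (hγ₁ : -(d : ℝ) ≤ γ) (hγ₂ : γ ≤ -2) :
    ∃ C : ℝ, 0 < C ∧
      ∀ f : EuclideanSpace ℝ (Fin d) → ℝ, (∀ v, 0 ≤ f v) → Integrable f →
        ∀ (v₀ : EuclideanSpace ℝ (Fin d)) (ℓ : ℝ), 0 < ℓ →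
          ℓ * (⨍ v in axisCube d v₀ ℓ,
                (if γ = -(d : ℝ) then f v else ∫ w, f w * ‖v - w‖ ^ γ)) ^ ((1 : ℝ) / 2) *
            (⨍ v in axisCube d v₀ ℓ, (∫ w, f w * ‖v - w‖ ^ (2 + γ))⁻¹) ^ ((1 : ℝ) / 2) ≤ C := by
  have hsd1 : 1 ≤ Real.sqrt d := by
    rw [show (1:ℝ) = Real.sqrt 1 from (Real.sqrt_one).symm]
    exact Real.sqrt_le_sqrt (by exact_mod_cast (by omega : 1 ≤ d))
  have hsd0 : 0 < Real.sqrt d := lt_of_lt_of_le one_pos hsd1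
  by_cases hei : γ = -(d : ℝ)
  · -- case γ = -d : h = f
    refine ⟨(((3:ℝ)/2 * Real.sqrt d) ^ (d - 2)) ^ ((1:ℝ)/2), by positivity, ?_⟩
    intro f hf0 hfi v₀ ℓ hℓ
    -- measurable representative
    set f' : EuclideanSpace ℝ (Fin d) → ℝ := fun v => max (hfi.1.mk f v) 0 with hf'_def
    have hf'm : StronglyMeasurable f' := (hfi.1.measurable_mk.max measurable_const).stronglyMeasurable
    have hff' : f =ᵐ[volume] f' := by
      filter_upwards [hfi.1.ae_eq_mk] with v hv
      rw [hf'_def]; simp only [← hv, max_eq_left (hf0 v)]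
    have hf'0 : ∀ v, 0 ≤ f' v := fun v => le_max_right _ _
    have hf'i : Integrable f' := hfi.congr hff'
    have hif : (fun v : EuclideanSpace ℝ (Fin d) =>
        if γ = -(d : ℝ) then f v else ∫ w, f w * ‖v - w‖ ^ γ) = fun v => f v := by
      funext v; rw [if_pos hei]
    rw [hif]
    have he1 : (⨍ v in axisCube d v₀ ℓ, f v) = ⨍ v in axisCube d v₀ ℓ, f' v := by
      rw [setAverage_eq, setAverage_eq]
      congr 1
      exact integral_congr_ae (ae_restrict_of_ae hff')
    have he2 : (fun v : EuclideanSpace ℝ (Fin d) => (∫ w, f w * ‖v - w‖ ^ (2 + γ))⁻¹)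
        = fun v => (∫ w, f' w * ‖v - w‖ ^ (2 + γ))⁻¹ := by
      funext v
      congr 1
      exact integral_congr_ae (hff'.mono fun w hw => by dsimp only; rw [hw])
    rw [he1, he2]
    -- prepare hint
    have hβ : 2 + γ ≤ 0 := by linarith
    have hQm : MeasurableSet (axisCube d v₀ ℓ) := axisCube_measurableSet d v₀ ℓ
    have hFi : Integrable (fun w => f' w * (‖v₀ - w‖ + ℓ * Real.sqrt d) ^ (2 + γ)) :=
      fg_integrable d hf'0 hf'm hf'i v₀ (by positivity) hβ
    have hF0 : ∀ w, 0 ≤ f' w * (‖v₀ - w‖ + ℓ * Real.sqrt d) ^ (2 + γ) :=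
      fun w => mul_nonneg (hf'0 w) (Real.rpow_nonneg (by positivity) _)
    set c : ℝ := (3:ℝ)/2 * (ℓ * Real.sqrt d) with hc_def
    have hc : 0 < c := by positivity
    have hcz : c ^ (2 + γ) = (c ^ (d - 2) : ℝ)⁻¹ := by
      have hexp : 2 + γ = -(((d - 2 : ℕ) : ℝ)) := by
        rw [hei, Nat.cast_sub (by omega : 2 ≤ d)]; push_cast; ring
      rw [hexp, Real.rpow_neg hc.le, Real.rpow_natCast]
    have hkey : ∀ w ∈ axisCube d v₀ ℓ,
        f' w ≤ c ^ (d - 2) * (f' w * (‖v₀ - w‖ + ℓ * Real.sqrt d) ^ (2 + γ)) := by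
      intro w hw
      have hb0 : (0:ℝ) < ‖v₀ - w‖ + ℓ * Real.sqrt d := by positivity
      have hble : ‖v₀ - w‖ + ℓ * Real.sqrt d ≤ c := by
        have := axisCube_norm_le hℓ.le hw
        rw [norm_sub_rev] at this
        rw [hc_def]; linarith
      have hg_ge : c ^ (2 + γ) ≤ (‖v₀ - w‖ + ℓ * Real.sqrt d) ^ (2 + γ) :=
        Real.rpow_le_rpow_of_nonpos hb0 hble hβ
      calc f' w = c ^ (d - 2) * (f' w * (c ^ (d - 2) : ℝ)⁻¹) := by
            have : (c:ℝ) ^ (d - 2) ≠ 0 := by positivity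
            field_simp
        _ ≤ c ^ (d - 2) * (f' w * (‖v₀ - w‖ + ℓ * Real.sqrt d) ^ (2 + γ)) := by
            apply mul_le_mul_of_nonneg_left _ (by positivity)
            rw [← hcz]
            exact mul_le_mul_of_nonneg_left hg_ge (hf'0 w)
    have hint : ∫ v in axisCube d v₀ ℓ, f' v ≤ ((3:ℝ)/2 * Real.sqrt d) ^ (d - 2) * ℓ ^ (d - 2) *
        ∫ w, f' w * (‖v₀ - w‖ + ℓ * Real.sqrt d) ^ (2 + γ) := by
      calc ∫ v in axisCube d v₀ ℓ, f' v
          ≤ ∫ w in axisCube d v₀ ℓ,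
              c ^ (d - 2) * (f' w * (‖v₀ - w‖ + ℓ * Real.sqrt d) ^ (2 + γ)) :=
            setIntegral_mono_on hf'i.integrableOn ((hFi.const_mul _).integrableOn) hQm hkey
        _ = c ^ (d - 2) * ∫ w in axisCube d v₀ ℓ,
              f' w * (‖v₀ - w‖ + ℓ * Real.sqrt d) ^ (2 + γ) := integral_const_mul _ _
        _ ≤ c ^ (d - 2) * ∫ w, f' w * (‖v₀ - w‖ + ℓ * Real.sqrt d) ^ (2 + γ) := by
            apply mul_le_mul_of_nonneg_left _ (by positivity)
            exact setIntegral_le_integral hFi (ae_of_all _ hF0)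
        _ = ((3:ℝ)/2 * Real.sqrt d) ^ (d - 2) * ℓ ^ (d - 2) *
              ∫ w, f' w * (‖v₀ - w‖ + ℓ * Real.sqrt d) ^ (2 + γ) := by
            rw [hc_def, show (3:ℝ)/2 * (ℓ * Real.sqrt d) = ((3:ℝ)/2 * Real.sqrt d) * ℓ from by
              ring, mul_pow]
    exact core_bound d hd γ hγ₂ f' hf'0 hf'm hf'i v₀ ℓ hℓ f' hf'0 _ (by positivity) hint
  · -- case γ ≠ -d
    have hγd : -(d : ℝ) < γ := lt_of_le_of_ne hγ₁ (Ne.symm hei)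
    obtain ⟨C₂, hC₂, hker⟩ := cube_kernel_bound d hd γ hγd hγ₂
    refine ⟨C₂ ^ ((1:ℝ)/2), by positivity, ?_⟩
    intro f hf0 hfi v₀ ℓ hℓ
    set f' : EuclideanSpace ℝ (Fin d) → ℝ := fun v => max (hfi.1.mk f v) 0 with hf'_def
    have hf'm : StronglyMeasurable f' := (hfi.1.measurable_mk.max measurable_const).stronglyMeasurable
    have hff' : f =ᵐ[volume] f' := by
      filter_upwards [hfi.1.ae_eq_mk] with v hv
      rw [hf'_def]; simp only [← hv, max_eq_left (hf0 v)]
    have hf'0 : ∀ v, 0 ≤ f' v := fun v => le_max_right _ _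
    have hf'i : Integrable f' := hfi.congr hff'
    have hif : (fun v : EuclideanSpace ℝ (Fin d) =>
        if γ = -(d : ℝ) then f v else ∫ w, f w * ‖v - w‖ ^ γ)
        = fun v => ∫ w, f' w * ‖v - w‖ ^ γ := by
      funext v
      rw [if_neg hei]
      exact integral_congr_ae (hff'.mono fun w hw => by dsimp only; rw [hw])
    have he2 : (fun v : EuclideanSpace ℝ (Fin d) => (∫ w, f w * ‖v - w‖ ^ (2 + γ))⁻¹)
        = fun v => (∫ w, f' w * ‖v - w‖ ^ (2 + γ))⁻¹ := by
      funext v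
      congr 1
      exact integral_congr_ae (hff'.mono fun w hw => by dsimp only; rw [hw])
    rw [hif, he2]
    have hβ : 2 + γ ≤ 0 := by linarith
    have hQm : MeasurableSet (axisCube d v₀ ℓ) := axisCube_measurableSet d v₀ ℓ
    have hFi : Integrable (fun w => f' w * (‖v₀ - w‖ + ℓ * Real.sqrt d) ^ (2 + γ)) :=
      fg_integrable d hf'0 hf'm hf'i v₀ (by positivity) hβ
    have hF0 : ∀ w, 0 ≤ f' w * (‖v₀ - w‖ + ℓ * Real.sqrt d) ^ (2 + γ) :=
      fun w => mul_nonneg (hf'0 w) (Real.rpow_nonneg (by positivity) _)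
    have hA0 : 0 ≤ ∫ w, f' w * (‖v₀ - w‖ + ℓ * Real.sqrt d) ^ (2 + γ) := integral_nonneg hF0
    -- measurability
    have hprodm : Measurable fun p : EuclideanSpace ℝ (Fin d) × EuclideanSpace ℝ (Fin d) =>
        f' p.2 * ‖p.1 - p.2‖ ^ γ :=
      (hf'm.measurable.comp measurable_snd).mul
        ((measurable_fst.sub measurable_snd).norm.pow measurable_const)
    have hHm : StronglyMeasurable fun v => ∫ w, f' w * ‖v - w‖ ^ γ :=
      hprodm.stronglyMeasurable.integral_prod_right'
    have hH0 : ∀ v, 0 ≤ ∫ w, f' w * ‖v - w‖ ^ γ :=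
      fun v => integral_nonneg fun w => mul_nonneg (hf'0 w) (Real.rpow_nonneg (norm_nonneg _) _)
    have hint : ∫ v in axisCube d v₀ ℓ, (∫ w, f' w * ‖v - w‖ ^ γ) ≤ C₂ * ℓ ^ (d - 2) *
        ∫ w, f' w * (‖v₀ - w‖ + ℓ * Real.sqrt d) ^ (2 + γ) := by
      have step_a : ∫ v in axisCube d v₀ ℓ, (∫ w, f' w * ‖v - w‖ ^ γ)
          = (∫⁻ v in axisCube d v₀ ℓ, ENNReal.ofReal (∫ w, f' w * ‖v - w‖ ^ γ)).toReal :=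
        integral_eq_lintegral_of_nonneg_ae (ae_of_all _ hH0)
          hHm.aestronglyMeasurable.restrict
      have chain : ∫⁻ v in axisCube d v₀ ℓ, ENNReal.ofReal (∫ w, f' w * ‖v - w‖ ^ γ)
          ≤ ENNReal.ofReal (C₂ * ℓ ^ (d - 2) *
            ∫ w, f' w * (‖v₀ - w‖ + ℓ * Real.sqrt d) ^ (2 + γ)) := by
        calc ∫⁻ v in axisCube d v₀ ℓ, ENNReal.ofReal (∫ w, f' w * ‖v - w‖ ^ γ)
            ≤ ∫⁻ v in axisCube d v₀ ℓ, ∫⁻ w, ENNReal.ofReal (f' w * ‖v - w‖ ^ γ) := by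
              apply lintegral_mono
              intro v
              by_cases hiv : Integrable (fun w => f' w * ‖v - w‖ ^ γ) volume
              · exact (ofReal_integral_eq_lintegral_ofReal hiv (ae_of_all _ fun w =>
                  mul_nonneg (hf'0 w) (Real.rpow_nonneg (norm_nonneg _) _))).le
              · dsimp only
                rw [integral_undef hiv]
                simp
          _ = ∫⁻ w, ∫⁻ v in axisCube d v₀ ℓ, ENNReal.ofReal (f' w * ‖v - w‖ ^ γ) :=
              lintegral_lintegral_swap (hprodm.ennreal_ofReal.aemeasurable)
          _ ≤ ∫⁻ w, ENNReal.ofReal ((C₂ * ℓ ^ (d - 2)) *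
                (f' w * (‖v₀ - w‖ + ℓ * Real.sqrt d) ^ (2 + γ))) := by
              apply lintegral_mono
              intro w
              calc ∫⁻ v in axisCube d v₀ ℓ, ENNReal.ofReal (f' w * ‖v - w‖ ^ γ)
                  = ENNReal.ofReal (f' w) *
                      ∫⁻ v in axisCube d v₀ ℓ, ENNReal.ofReal (‖v - w‖ ^ γ) := by
                    simp_rw [ENNReal.ofReal_mul (hf'0 w)]
                    exact lintegral_const_mul _
                      (((measurable_id.sub measurable_const).norm.pow
                        measurable_const).ennreal_ofReal)
                _ ≤ ENNReal.ofReal (f' w) * ENNReal.ofReal (C₂ * ℓ ^ (d - 2) *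
                      (‖v₀ - w‖ + ℓ * Real.sqrt d) ^ (2 + γ)) :=
                    mul_le_mul_right (hker v₀ w ℓ hℓ) _
                _ = ENNReal.ofReal ((C₂ * ℓ ^ (d - 2)) *
                      (f' w * (‖v₀ - w‖ + ℓ * Real.sqrt d) ^ (2 + γ))) := by
                    rw [← ENNReal.ofReal_mul (hf'0 w)]
                    congr 1
                    ring
          _ = ENNReal.ofReal (∫ w, (C₂ * ℓ ^ (d - 2)) *
                (f' w * (‖v₀ - w‖ + ℓ * Real.sqrt d) ^ (2 + γ))) :=
              (ofReal_integral_eq_lintegral_ofReal (hFi.const_mul _)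
                (ae_of_all _ fun w => mul_nonneg (by positivity) (hF0 w))).symm
          _ = ENNReal.ofReal (C₂ * ℓ ^ (d - 2) *
                ∫ w, f' w * (‖v₀ - w‖ + ℓ * Real.sqrt d) ^ (2 + γ)) := by
              rw [integral_const_mul]
      rw [step_a]
      refine le_trans (ENNReal.toReal_mono ENNReal.ofReal_ne_top chain) ?_
      rw [ENNReal.toReal_ofReal (mul_nonneg (by positivity) hA0)]
    exact core_bound d hd γ hγ₂ f' hf'0 hf'm hf'i v₀ ℓ hℓ _ hH0 C₂ hC₂ hint
end
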